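/- arXiv:2007.10522 — 2 statements merged into one kernel-verified Lean document; each statement's English description precedes it below -/
import Mathlib

section
/- Let G be a connected linklessly embeddable (nIL) graph. Then no minimal vertex cut set of G consists of 5 vertices inducing a complete graph K_5 in G. -/
open SimpleGraph

/-- `H` is a minor of `G`: there is a family of nonempty, pairwise disjoint,
connected branch sets in `G`, one for each vertex of `H`, with an edge of `G`
between the branch sets of any two adjacent vertices of `H`. -/
def IsMinor {W V : Type} (H : SimpleGraph W) (G : SimpleGraph V) : Prop :=
  ∃ f : W → Set V,
    (∀ w, (f w).Nonempty) ∧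
    (∀ w, (G.induce (f w)).Connected) ∧
    (Pairwise fun w₁ w₂ => Disjoint (f w₁) (f w₂)) ∧
    ∀ ⦃w₁ w₂⦄, H.Adj w₁ w₂ → ∃ v₁ ∈ f w₁, ∃ v₂ ∈ f w₂, G.Adj v₁ v₂

/-- The result of a `∇Y`-move on the triangle `a b c` of `G`: delete the edges of
the triangle and add a new vertex (`none`) joined to `a`, `b`, `c`. -/
def triangleY {V : Type} (G : SimpleGraph V) (a b c : V) : SimpleGraph (Option V) :=
  (SimpleGraph.map Function.Embedding.some
      (G.deleteEdges {s(a, b), s(b, c), s(a, c)})) ⊔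
    SimpleGraph.fromEdgeSet {s((none : Option V), some a), s(none, some b), s(none, some c)}

/-- Membership in the Petersen family: the graphs obtained from `K₆` by
`∇Y`-moves and `Y∇`-moves (the inverse operation), up to isomorphism. -/
inductive IsPetersenFamily : ∀ {V : Type}, SimpleGraph V → Prop
  | k6 : IsPetersenFamily (⊤ : SimpleGraph (Fin 6))
  | deltaY {V : Type} {G : SimpleGraph V} {a b c : V} :
      IsPetersenFamily G → G.Adj a b → G.Adj b c → G.Adj a c →
      IsPetersenFamily (triangleY G a b c)
  | yDelta {V : Type} {G : SimpleGraph V} {a b c : V} :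
      IsPetersenFamily (triangleY G a b c) → G.Adj a b → G.Adj b c → G.Adj a c →
      IsPetersenFamily G
  | iso {V W : Type} {G : SimpleGraph V} {H : SimpleGraph W} :
      IsPetersenFamily G → G ≃g H → IsPetersenFamily H

/-- A graph is linklessly embeddable (nIL) iff it has no minor in the Petersen family. -/
def IsLinkless {V : Type} (G : SimpleGraph V) : Prop :=
  ∀ ⦃W : Type⦄ (P : SimpleGraph W), IsPetersenFamily P → ¬ IsMinor P G

/-- The graph obtained from `G` by adding the edge `ab`. -/
def addEdge {V : Type} (G : SimpleGraph V) (a b : V) : SimpleGraph V :=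
  G ⊔ SimpleGraph.fromEdgeSet {s(a, b)}

/-- A nIL graph is maxnil if adding any edge yields a graph that is not nIL. -/
def IsMaxnil {V : Type} (G : SimpleGraph V) : Prop :=
  IsLinkless G ∧ ∀ a b : V, a ≠ b → ¬ G.Adj a b → ¬ IsLinkless (addEdge G a b)

/-- `S` is a vertex cut set of the connected graph `G` if `G - S` is disconnected. -/
def IsVertexCut {V : Type} (G : SimpleGraph V) (S : Set V) : Prop :=
  G.Connected ∧ ¬ (G.induce Sᶜ).Preconnected

/-- A vertex cut set is minimal if no proper subset of it is a vertex cut set. -/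
def IsMinimalVertexCut {V : Type} (G : SimpleGraph V) (S : Set V) : Prop :=
  IsVertexCut G S ∧ ∀ S' ⊂ S, ¬ IsVertexCut G S'

/-- A set `T` of vertices of `H` (inducing a `K₄`) is strongly separating if `H - T`
has at least two connected components such that every vertex of `T` has a
neighbor in each of them. -/
def StronglySeparating {V : Type} (H : SimpleGraph V) (T : Set V) : Prop :=
  ∃ C₁ C₂ : (H.induce Tᶜ).ConnectedComponent, C₁ ≠ C₂ ∧
    ∀ v ∈ T, (∃ u ∈ C₁.supp, H.Adj v ↑u) ∧ (∃ u ∈ C₂.supp, H.Adj v ↑u)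

/-- `G` is maximal without a `K₆` minor. -/
def IsMaximalK6MinorFree {V : Type} (G : SimpleGraph V) : Prop :=
  ¬ IsMinor (⊤ : SimpleGraph (Fin 6)) G ∧
    ∀ a b : V, a ≠ b → ¬ G.Adj a b → IsMinor (⊤ : SimpleGraph (Fin 6)) (addEdge G a b)

/-- In a connected linklessly embeddable graph, no minimal vertex cut set consists of
5 vertices inducing a complete graph `K₅`. -/
theorem stmt_12 {V : Type} [Fintype V] (G : SimpleGraph V)
    (hconn : G.Connected) (hnil : IsLinkless G) :
    ¬ ∃ S : Set V, IsMinimalVertexCut G S ∧ S.ncard = 5 ∧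
        ∀ a ∈ S, ∀ b ∈ S, a ≠ b → G.Adj a b := by

  rintro ⟨S, ⟨⟨hGc, hnp⟩, hmin⟩, hcard, hK5⟩
  rw [SimpleGraph.Preconnected] at hnp
  push_neg at hnp
  obtain ⟨x, y, hxy⟩ := hnp
  set H := G.induce Sᶜ with hH
  set C1 := H.connectedComponentMk x with hC1def
  set T : Set V := Subtype.val '' C1.supp with hTdef
  have hxC1 : x ∈ C1.supp := by simp [SimpleGraph.ConnectedComponent.mem_supp_iff, hC1def]
  -- key lemma: every vertex of S has a neighbor in C1
  have key : ∀ v ∈ S, ∃ u : ↥Sᶜ, u ∈ C1.supp ∧ G.Adj v ↑u := by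
    intro v hv
    by_contra hno
    push_neg at hno
    apply hmin (S \ {v}) ⟨Set.diff_subset, fun h => (h hv).2 rfl⟩
    refine ⟨hconn, ?_⟩
    intro hpre
    have hxS' : (x : V) ∈ (S \ {v})ᶜ := fun h => x.2 h.1
    have hyS' : (y : V) ∈ (S \ {v})ᶜ := fun h => y.2 h.1
    obtain ⟨w⟩ := hpre ⟨x, hxS'⟩ ⟨y, hyS'⟩
    have closed : ∀ (a b : ↥(S \ {v})ᶜ), (G.induce (S \ {v})ᶜ).Walk a b →
        (∃ ha : (a : V) ∈ Sᶜ, (⟨↑a, ha⟩ : ↥Sᶜ) ∈ C1.supp) →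
        ∃ hb : (b : V) ∈ Sᶜ, (⟨↑b, hb⟩ : ↥Sᶜ) ∈ C1.supp := by
      intro a b w
      induction w with
      | nil => exact id
      | @cons a c b hadj p ih =>
        rintro ⟨ha, hamem⟩
        have hGac : G.Adj ↑a ↑c := hadj
        have hcS : (c : V) ∈ Sᶜ := by
          intro hcS
          have hcv : (c : V) = v := by
            by_contra hne
            exact c.2 ⟨hcS, hne⟩
          have : G.Adj (↑c) ↑a := hGac.symm
          rw [hcv] at this
          exact hno ⟨↑a, ha⟩ hamem this
        apply ih
        refine ⟨hcS, ?_⟩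
        have hHac : H.Adj ⟨↑a, ha⟩ ⟨↑c, hcS⟩ := hGac
        rw [SimpleGraph.ConnectedComponent.mem_supp_iff] at hamem ⊢
        rw [← hamem]
        exact (SimpleGraph.ConnectedComponent.connectedComponentMk_eq_of_adj hHac).symm
    obtain ⟨hy', hymem⟩ := closed _ _ w ⟨x.2, hxC1⟩
    rw [SimpleGraph.ConnectedComponent.mem_supp_iff] at hymem
    exact hxy (SimpleGraph.ConnectedComponent.exact (by
      have : (⟨(y : V), hy'⟩ : ↥Sᶜ) = y := rfl
      rw [this] at hymem
      rw [hC1def] at hymem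
      exact hymem.symm))
  -- connectivity transfer into T
  have comp_reach : ∀ (a b : ↥Sᶜ), H.Walk a b → ∀ (ha : a ∈ C1.supp),
      ∃ hb : b ∈ C1.supp,
        (G.induce T).Reachable ⟨↑a, ⟨a, ha, rfl⟩⟩ ⟨↑b, ⟨b, hb, rfl⟩⟩ := by
    intro a b w
    induction w with
    | nil => exact fun ha => ⟨ha, SimpleGraph.Reachable.refl _⟩
    | @cons a c b hadj p ih =>
      intro ha
      have hcmem : c ∈ C1.supp := by
        rw [SimpleGraph.ConnectedComponent.mem_supp_iff] at ha ⊢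
        rw [← ha]
        exact (SimpleGraph.ConnectedComponent.connectedComponentMk_eq_of_adj hadj).symm
      obtain ⟨hb, hr⟩ := ih hcmem
      refine ⟨hb, SimpleGraph.Reachable.trans ?_ hr⟩
      exact SimpleGraph.Adj.reachable (by exact (hadj : G.Adj ↑a ↑c))
  have hTconn : (G.induce T).Connected := by
    rw [SimpleGraph.connected_iff]
    constructor
    · rintro ⟨t, ht⟩ ⟨t', ht'⟩
      obtain ⟨u, hu, rfl⟩ := ht
      obtain ⟨u', hu', rfl⟩ := ht'
      have hreach : H.Reachable u u' := by
        apply SimpleGraph.ConnectedComponent.exact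
        rw [SimpleGraph.ConnectedComponent.mem_supp_iff] at hu hu'
        rw [hu, hu']
      obtain ⟨w⟩ := hreach
      obtain ⟨hb, hr⟩ := comp_reach _ _ w hu
      exact hr
    · exact ⟨⟨↑x, ⟨x, hxC1, rfl⟩⟩⟩
  -- enumerate S
  have hScard : Nat.card ↥S = 5 := by rw [Nat.card_coe_set_eq]; exact hcard
  obtain ⟨e⟩ : Nonempty (↥S ≃ Fin 5) := ⟨Finite.equivFinOfCardEq hScard⟩
  -- the branch sets
  set f : Fin 6 → Set V :=
    fun i => Fin.lastCases T (fun j => {(↑(e.symm j) : V)}) i with hfdef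
  have hfcast : ∀ j : Fin 5, f j.castSucc = {(↑(e.symm j) : V)} := by
    intro j; simp [hfdef]
  have hflast : f (Fin.last 5) = T := by simp only [hfdef, Fin.lastCases_last]
  apply hnil (⊤ : SimpleGraph (Fin 6)) IsPetersenFamily.k6
  refine ⟨f, ?_, ?_, ?_, ?_⟩
  · intro w
    induction w using Fin.lastCases with
    | last => rw [hflast]; exact ⟨↑x, ⟨x, hxC1, rfl⟩⟩
    | cast j => rw [hfcast]; exact ⟨_, rfl⟩
  · intro w
    induction w using Fin.lastCases with
    | last => rw [hflast]; exact hTconn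
    | cast j =>
      rw [hfcast]
      rw [SimpleGraph.connected_iff]
      constructor
      · rintro ⟨a, ha⟩ ⟨b, hb⟩
        simp only [Set.mem_singleton_iff] at ha hb
        have : (⟨a, ha⟩ : ↥({(↑(e.symm j) : V)} : Set V)) = ⟨b, hb⟩ := by
          apply Subtype.ext; simp_all
        rw [this]
      · exact ⟨⟨_, rfl⟩⟩
  · intro w₁ w₂ hne
    have hTS : ∀ t ∈ T, t ∈ Sᶜ := by
      rintro t ⟨u, _, rfl⟩; exact u.2
    induction w₁ using Fin.lastCases with
    | last =>
      induction w₂ using Fin.lastCases with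
      | last => exact absurd rfl hne
      | cast j =>
        rw [hflast, hfcast]
        rw [Set.disjoint_singleton_right]
        exact fun h => (hTS _ h) (e.symm j).2
    | cast j =>
      induction w₂ using Fin.lastCases with
      | last =>
        rw [hflast, hfcast]
        rw [Set.disjoint_singleton_left]
        exact fun h => (hTS _ h) (e.symm j).2
      | cast j' =>
        rw [hfcast, hfcast]
        rw [Set.disjoint_singleton_left, Set.mem_singleton_iff]
        intro h
        apply hne
        have : e.symm j = e.symm j' := Subtype.ext h
        rw [e.symm.injective this]
  · intro w₁ w₂ hadj
    have hne : w₁ ≠ w₂ := by simpa using hadj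
    induction w₁ using Fin.lastCases with
    | last =>
      induction w₂ using Fin.lastCases with
      | last => exact absurd rfl hne
      | cast j =>
        obtain ⟨u, hu, hvu⟩ := key ↑(e.symm j) (e.symm j).2
        exact ⟨↑u, by rw [hflast]; exact ⟨u, hu, rfl⟩, ↑(e.symm j),
          by rw [hfcast]; exact rfl, hvu.symm⟩
    | cast j =>
      induction w₂ using Fin.lastCases with
      | last =>
        obtain ⟨u, hu, hvu⟩ := key ↑(e.symm j) (e.symm j).2
        exact ⟨↑(e.symm j), by rw [hfcast]; exact rfl, ↑u,
          by rw [hflast]; exact ⟨u, hu, rfl⟩, hvu⟩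
      | cast j' =>
        have hjj : j ≠ j' := by
          intro h; exact hne (by rw [h])
        have hne' : (↑(e.symm j) : V) ≠ ↑(e.symm j') := by
          intro h
          exact hjj (by simpa using e.symm.injective (Subtype.ext h))
        exact ⟨↑(e.symm j), by rw [hfcast]; exact rfl, ↑(e.symm j'),
          by rw [hfcast]; exact rfl,
          hK5 _ (e.symm j).2 _ (e.symm j').2 hne'⟩
end

section
/- There exist maxnil graphs G_1 and G_2, each isomorphic to K_6 minus an edge, and a graph G on 7 vertices that is the clique sum of G_1 and G_2 over K_5 (i.e., V(G_1) ∩ V(G_2) induces a complete graph on 5 vertices in both), such that G is maxnil. -/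
open SimpleGraph

def ofB {n : ℕ} (A : Fin n → Fin n → Bool) (hs : ∀ i j, A i j = A j i) (hi : ∀ i, A i i = false) :
    SimpleGraph (Fin n) where
  Adj i j := A i j = true
  symm := by constructor; intro i j h; rw [hs]; exact h
  loopless := by constructor; intro i h; rw [hi] at h; exact Bool.false_ne_true h

instance {n : ℕ} {A : Fin n → Fin n → Bool} {hs hi} : DecidableRel (ofB A hs hi).Adj :=
  fun i j => inferInstanceAs (Decidable (A i j = true))

/-- Boolean adjacency of the ∇Y graph. -/
def tyb {V : Type} [DecidableEq V] (G : SimpleGraph V) [DecidableRel G.Adj] (a b c : V) :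
    Option V → Option V → Bool
  | some u, some v => decide (G.Adj u v) &&
      !decide ((u = a ∧ v = b) ∨ (u = b ∧ v = a) ∨ (u = b ∧ v = c) ∨ (u = c ∧ v = b) ∨
        (u = a ∧ v = c) ∨ (u = c ∧ v = a))
  | some u, none => decide (u = a ∨ u = b ∨ u = c)
  | none, some v => decide (v = a ∨ v = b ∨ v = c)
  | none, none => false

def DYC {n m : ℕ} (Mi : SimpleGraph (Fin n)) [DecidableRel Mi.Adj] (Mj : SimpleGraph (Fin m))
    (a b c : Fin n) (τ : Fin m → Option (Fin n)) : Prop :=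
  (∀ x y : Fin m, τ x = τ y → x = y) ∧
  ∀ x y : Fin m, Mj.Adj x y ↔ tyb Mi a b c (τ x) (τ y) = true

def YDC {n m : ℕ} (Mi : SimpleGraph (Fin n)) (Mj : SimpleGraph (Fin m))
    (v : Fin n) (g : Fin m → Fin n) : Prop :=
  (∀ x y : Fin m, g x = g y → x = y) ∧ (∀ t, g t ≠ v) ∧
  ∀ x y : Fin m, Mj.Adj x y ↔
    (Mi.Adj (g x) (g y) ∨ (Mi.Adj v (g x) ∧ Mi.Adj v (g y) ∧ g x ≠ g y))

instance {n m : ℕ} (Mi : SimpleGraph (Fin n)) [DecidableRel Mi.Adj] (Mj : SimpleGraph (Fin m))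
    [DecidableRel Mj.Adj] (a b c : Fin n) (τ : Fin m → Option (Fin n)) :
    Decidable (DYC Mi Mj a b c τ) :=
  inferInstanceAs (Decidable (_ ∧ _))

instance {n m : ℕ} (Mi : SimpleGraph (Fin n)) [DecidableRel Mi.Adj] (Mj : SimpleGraph (Fin m))
    [DecidableRel Mj.Adj] (v : Fin n) (g : Fin m → Fin n) :
    Decidable (YDC Mi Mj v g) :=
  inferInstanceAs (Decidable (_ ∧ _ ∧ _))
def A0 : Fin 6 → Fin 6 → Bool := ![![false, true, true, true, true, true], ![true, false, true, true, true, true], ![true, true, false, true, true, true], ![true, true, true, false, true, true], ![true, true, true, true, false, true], ![true, true, true, true, true, false]]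

abbrev M0 : SimpleGraph (Fin 6) := ofB A0 (by decide) (by decide)

def A1 : Fin 7 → Fin 7 → Bool := ![![false, false, false, true, true, true, true], ![false, false, false, true, true, true, true], ![false, false, false, true, true, true, true], ![true, true, true, false, true, true, false], ![true, true, true, true, false, true, false], ![true, true, true, true, true, false, false], ![true, true, true, false, false, false, false]]

abbrev M1 : SimpleGraph (Fin 7) := ofB A1 (by decide) (by decide)

def A2 : Fin 8 → Fin 8 → Bool := ![![false, false, false, false, false, true, true, true], ![false, false, false, true, true, true, true, false], ![false, false, false, true, true, true, true, false], ![false, true, true, false, false, true, false, true], ![false, true, true, false, false, true, false, true], ![true, true, true, true, true, false, false, false], ![true, true, true, false, false, false, false, false], ![true, false, false, true, true, false, false, false]]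

abbrev M2 : SimpleGraph (Fin 8) := ofB A2 (by decide) (by decide)

def A3 : Fin 8 → Fin 8 → Bool := ![![false, false, false, true, true, true, true, false], ![false, false, false, true, true, true, true, false], ![false, false, false, true, true, true, true, false], ![true, true, true, false, false, false, false, true], ![true, true, true, false, false, false, false, true], ![true, true, true, false, false, false, false, true], ![true, true, true, false, false, false, false, false], ![false, false, false, true, true, true, false, false]]

abbrev M3 : SimpleGraph (Fin 8) := ofB A3 (by decide) (by decide)

def A4 : Fin 9 → Fin 9 → Bool := ![![false, false, false, false, false, true, true, true, false], ![false, false, false, false, true, false, true, false, true], ![false, false, false, true, true, true, true, false, false], ![false, false, true, false, false, false, false, true, true], ![false, true, true, false, false, true, false, true, false], ![true, false, true, false, true, false, false, false, true], ![true, true, true, false, false, false, false, false, false], ![true, false, false, true, true, false, false, false, false], ![false, true, false, true, false, true, false, false, false]]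

abbrev M4 : SimpleGraph (Fin 9) := ofB A4 (by decide) (by decide)

def A5 : Fin 7 → Fin 7 → Bool := ![![false, false, true, true, true, true, false], ![false, false, true, true, true, true, false], ![true, true, false, false, true, false, true], ![true, true, false, false, true, false, true], ![true, true, true, true, false, true, true], ![true, true, false, false, true, false, true], ![false, false, true, true, true, true, false]]

abbrev M5 : SimpleGraph (Fin 7) := ofB A5 (by decide) (by decide)

def A6 : Fin 10 → Fin 10 → Bool := ![![false, false, false, false, false, true, true, true, false, false], ![false, false, false, false, true, false, true, false, true, false], ![false, false, false, true, false, false, true, false, false, true], ![false, false, true, false, false, false, false, true, true, false], ![false, true, false, false, false, false, false, true, false, true], ![true, false, false, false, false, false, false, false, true, true], ![true, true, true, false, false, false, false, false, false, false], ![true, false, false, true, true, false, false, false, false, false], ![false, true, false, true, false, true, false, false, false, false], ![false, false, true, false, true, true, false, false, false, false]]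

abbrev M6 : SimpleGraph (Fin 10) := ofB A6 (by decide) (by decide)

def dyT0_1 : Fin 6 → Fin 6 → Fin 6 → Fin 7 → Option (Fin 6) :=
 fun a b c =>
  if a = 0 ∧ b = 1 ∧ c = 2 then ![some 0, some 1, some 2, some 3, some 4, some 5, none] else
  if a = 0 ∧ b = 1 ∧ c = 3 then ![some 0, some 1, some 3, some 2, some 4, some 5, none] else
  if a = 0 ∧ b = 1 ∧ c = 4 then ![some 0, some 1, some 4, some 2, some 3, some 5, none] else
  if a = 0 ∧ b = 1 ∧ c = 5 then ![some 0, some 1, some 5, some 2, some 3, some 4, none] else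
  if a = 0 ∧ b = 2 ∧ c = 3 then ![some 0, some 2, some 3, some 1, some 4, some 5, none] else
  if a = 0 ∧ b = 2 ∧ c = 4 then ![some 0, some 2, some 4, some 1, some 3, some 5, none] else
  if a = 0 ∧ b = 2 ∧ c = 5 then ![some 0, some 2, some 5, some 1, some 3, some 4, none] else
  if a = 0 ∧ b = 3 ∧ c = 4 then ![some 0, some 3, some 4, some 1, some 2, some 5, none] else
  if a = 0 ∧ b = 3 ∧ c = 5 then ![some 0, some 3, some 5, some 1, some 2, some 4, none] else
  if a = 0 ∧ b = 4 ∧ c = 5 then ![some 0, some 4, some 5, some 1, some 2, some 3, none] else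
  if a = 1 ∧ b = 2 ∧ c = 3 then ![some 1, some 2, some 3, some 0, some 4, some 5, none] else
  if a = 1 ∧ b = 2 ∧ c = 4 then ![some 1, some 2, some 4, some 0, some 3, some 5, none] else
  if a = 1 ∧ b = 2 ∧ c = 5 then ![some 1, some 2, some 5, some 0, some 3, some 4, none] else
  if a = 1 ∧ b = 3 ∧ c = 4 then ![some 1, some 3, some 4, some 0, some 2, some 5, none] else
  if a = 1 ∧ b = 3 ∧ c = 5 then ![some 1, some 3, some 5, some 0, some 2, some 4, none] else
  if a = 1 ∧ b = 4 ∧ c = 5 then ![some 1, some 4, some 5, some 0, some 2, some 3, none] else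
  if a = 2 ∧ b = 3 ∧ c = 4 then ![some 2, some 3, some 4, some 0, some 1, some 5, none] else
  if a = 2 ∧ b = 3 ∧ c = 5 then ![some 2, some 3, some 5, some 0, some 1, some 4, none] else
  if a = 2 ∧ b = 4 ∧ c = 5 then ![some 2, some 4, some 5, some 0, some 1, some 3, none] else
  if a = 3 ∧ b = 4 ∧ c = 5 then ![some 3, some 4, some 5, some 0, some 1, some 2, none] else
  fun _ => none

def dyT1_2 : Fin 7 → Fin 7 → Fin 7 → Fin 8 → Option (Fin 7) :=
 fun a b c =>
  if a = 0 ∧ b = 3 ∧ c = 4 then ![some 0, some 1, some 2, some 3, some 4, some 5, some 6, none] else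
  if a = 0 ∧ b = 3 ∧ c = 5 then ![some 0, some 1, some 2, some 3, some 5, some 4, some 6, none] else
  if a = 0 ∧ b = 4 ∧ c = 5 then ![some 0, some 1, some 2, some 4, some 5, some 3, some 6, none] else
  if a = 1 ∧ b = 3 ∧ c = 4 then ![some 1, some 0, some 2, some 3, some 4, some 5, some 6, none] else
  if a = 1 ∧ b = 3 ∧ c = 5 then ![some 1, some 0, some 2, some 3, some 5, some 4, some 6, none] else
  if a = 1 ∧ b = 4 ∧ c = 5 then ![some 1, some 0, some 2, some 4, some 5, some 3, some 6, none] else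
  if a = 2 ∧ b = 3 ∧ c = 4 then ![some 2, some 0, some 1, some 3, some 4, some 5, some 6, none] else
  if a = 2 ∧ b = 3 ∧ c = 5 then ![some 2, some 0, some 1, some 3, some 5, some 4, some 6, none] else
  if a = 2 ∧ b = 4 ∧ c = 5 then ![some 2, some 0, some 1, some 4, some 5, some 3, some 6, none] else
  fun _ => none

def dyT1_3 : Fin 7 → Fin 7 → Fin 7 → Fin 8 → Option (Fin 7) :=
 fun a b c =>
  if a = 3 ∧ b = 4 ∧ c = 5 then ![some 0, some 1, some 2, some 3, some 4, some 5, some 6, none] else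
  fun _ => none

def dyT2_4 : Fin 8 → Fin 8 → Fin 8 → Fin 9 → Option (Fin 8) :=
 fun a b c =>
  if a = 1 ∧ b = 3 ∧ c = 5 then ![some 0, some 1, some 2, some 3, some 4, some 5, some 6, some 7, none] else
  if a = 1 ∧ b = 4 ∧ c = 5 then ![some 0, some 1, some 2, some 4, some 3, some 5, some 6, some 7, none] else
  if a = 2 ∧ b = 3 ∧ c = 5 then ![some 0, some 2, some 1, some 3, some 4, some 5, some 6, some 7, none] else
  if a = 2 ∧ b = 4 ∧ c = 5 then ![some 0, some 2, some 1, some 4, some 3, some 5, some 6, some 7, none] else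
  fun _ => none

def dyT4_6 : Fin 9 → Fin 9 → Fin 9 → Fin 10 → Option (Fin 9) :=
 fun a b c =>
  if a = 2 ∧ b = 4 ∧ c = 5 then ![some 0, some 1, some 2, some 3, some 4, some 5, some 6, some 7, some 8, none] else
  fun _ => none

def dyT5_2 : Fin 7 → Fin 7 → Fin 7 → Fin 8 → Option (Fin 7) :=
 fun a b c =>
  if a = 0 ∧ b = 2 ∧ c = 4 then ![none, some 3, some 5, some 1, some 6, some 4, some 0, some 2] else
  if a = 0 ∧ b = 3 ∧ c = 4 then ![none, some 2, some 5, some 1, some 6, some 4, some 0, some 3] else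
  if a = 0 ∧ b = 4 ∧ c = 5 then ![none, some 2, some 3, some 1, some 6, some 4, some 0, some 5] else
  if a = 1 ∧ b = 2 ∧ c = 4 then ![none, some 0, some 6, some 3, some 5, some 4, some 2, some 1] else
  if a = 1 ∧ b = 3 ∧ c = 4 then ![none, some 0, some 6, some 2, some 5, some 4, some 3, some 1] else
  if a = 1 ∧ b = 4 ∧ c = 5 then ![none, some 0, some 6, some 2, some 3, some 4, some 5, some 1] else
  if a = 2 ∧ b = 4 ∧ c = 6 then ![none, some 0, some 1, some 3, some 5, some 4, some 2, some 6] else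
  if a = 3 ∧ b = 4 ∧ c = 6 then ![none, some 0, some 1, some 2, some 5, some 4, some 3, some 6] else
  if a = 4 ∧ b = 5 ∧ c = 6 then ![none, some 0, some 1, some 2, some 3, some 4, some 5, some 6] else
  fun _ => none

def ydT1_0 : Fin 7 → Fin 6 → Fin 7 :=
 fun v =>
  if v = 6 then ![0, 1, 2, 3, 4, 5] else
  fun _ => 0

def ydT2_1 : Fin 8 → Fin 7 → Fin 8 :=
 fun v =>
  if v = 6 then ![0, 3, 4, 1, 2, 5, 7] else
  if v = 7 then ![0, 1, 2, 3, 4, 5, 6] else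
  fun _ => 0

def ydT2_5 : Fin 8 → Fin 7 → Fin 8 :=
 fun v =>
  if v = 0 then ![1, 2, 3, 4, 5, 6, 7] else
  fun _ => 0

def ydT3_1 : Fin 8 → Fin 7 → Fin 8 :=
 fun v =>
  if v = 6 then ![3, 4, 5, 0, 1, 2, 7] else
  if v = 7 then ![0, 1, 2, 3, 4, 5, 6] else
  fun _ => 0

def ydT4_2 : Fin 9 → Fin 8 → Fin 9 :=
 fun v =>
  if v = 0 then ![8, 4, 6, 2, 7, 5, 1, 3] else
  if v = 1 then ![7, 5, 6, 2, 8, 4, 0, 3] else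
  if v = 3 then ![6, 5, 7, 4, 8, 2, 0, 1] else
  if v = 6 then ![3, 0, 4, 1, 5, 2, 7, 8] else
  if v = 7 then ![1, 0, 2, 3, 5, 4, 6, 8] else
  if v = 8 then ![0, 1, 2, 3, 4, 5, 6, 7] else
  fun _ => 0

def ydT6_4 : Fin 10 → Fin 9 → Fin 10 :=
 fun v =>
  if v = 0 then ![1, 3, 5, 9, 7, 6, 8, 4, 2] else
  if v = 1 then ![0, 3, 4, 9, 8, 6, 7, 5, 2] else
  if v = 2 then ![0, 4, 3, 8, 9, 6, 7, 5, 1] else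
  if v = 3 then ![0, 1, 2, 9, 8, 7, 6, 5, 4] else
  if v = 4 then ![0, 2, 1, 8, 9, 7, 6, 5, 3] else
  if v = 5 then ![1, 2, 0, 7, 9, 8, 6, 4, 3] else
  if v = 6 then ![3, 4, 0, 5, 1, 2, 7, 8, 9] else
  if v = 7 then ![1, 2, 0, 5, 3, 4, 6, 8, 9] else
  if v = 8 then ![0, 2, 1, 4, 3, 5, 6, 7, 9] else
  if v = 9 then ![0, 1, 2, 3, 4, 5, 6, 7, 8] else
  fun _ => 0

lemma dy0 : ∀ a b c : Fin 6, a < b → b < c → M0.Adj a b → M0.Adj b c → M0.Adj a c →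
    DYC M0 M1 a b c (dyT0_1 a b c) := by decide

lemma dy1 : ∀ a b c : Fin 7, a < b → b < c → M1.Adj a b → M1.Adj b c → M1.Adj a c →
    DYC M1 M2 a b c (dyT1_2 a b c) ∨ DYC M1 M3 a b c (dyT1_3 a b c) := by decide

lemma dy2 : ∀ a b c : Fin 8, a < b → b < c → M2.Adj a b → M2.Adj b c → M2.Adj a c →
    DYC M2 M4 a b c (dyT2_4 a b c) := by decide

lemma dy3 : ∀ a b c : Fin 8, a < b → b < c → M3.Adj a b → M3.Adj b c → M3.Adj a c →
    False := by decide

lemma dy4 : ∀ a b c : Fin 9, a < b → b < c → M4.Adj a b → M4.Adj b c → M4.Adj a c →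
    DYC M4 M6 a b c (dyT4_6 a b c) := by decide

lemma dy5 : ∀ a b c : Fin 7, a < b → b < c → M5.Adj a b → M5.Adj b c → M5.Adj a c →
    DYC M5 M2 a b c (dyT5_2 a b c) := by decide

lemma dy6 : ∀ a b c : Fin 10, a < b → b < c → M6.Adj a b → M6.Adj b c → M6.Adj a c →
    False := by decide

lemma yd0 : ∀ v p q r : Fin 6, p < q → q < r → (∀ x, M0.Adj x v ↔ (x = p ∨ x = q ∨ x = r)) →
    False := by decide

lemma yd1 : ∀ v p q r : Fin 7, p < q → q < r → (∀ x, M1.Adj x v ↔ (x = p ∨ x = q ∨ x = r)) →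
    YDC M1 M0 v (ydT1_0 v) := by decide

lemma yd2 : ∀ v p q r : Fin 8, p < q → q < r → (∀ x, M2.Adj x v ↔ (x = p ∨ x = q ∨ x = r)) →
    YDC M2 M1 v (ydT2_1 v) ∨ YDC M2 M5 v (ydT2_5 v) := by decide

lemma yd3 : ∀ v p q r : Fin 8, p < q → q < r → (∀ x, M3.Adj x v ↔ (x = p ∨ x = q ∨ x = r)) →
    YDC M3 M1 v (ydT3_1 v) := by decide

lemma yd4 : ∀ v p q r : Fin 9, p < q → q < r → (∀ x, M4.Adj x v ↔ (x = p ∨ x = q ∨ x = r)) →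
    YDC M4 M2 v (ydT4_2 v) := by decide

lemma yd5 : ∀ v p q r : Fin 7, p < q → q < r → (∀ x, M5.Adj x v ↔ (x = p ∨ x = q ∨ x = r)) →
    False := by decide

lemma yd6 : ∀ v p q r : Fin 10, p < q → q < r → (∀ x, M6.Adj x v ↔ (x = p ∨ x = q ∨ x = r)) →
    YDC M6 M4 v (ydT6_4 v) := by decide
set_option maxHeartbeats 1000000

lemma triangleY_adj_ss {V : Type} (G : SimpleGraph V) (a b c u v : V) :
    (triangleY G a b c).Adj (some u) (some v) ↔
      (G.Adj u v ∧ ¬((u = a ∧ v = b) ∨ (u = b ∧ v = a) ∨ (u = b ∧ v = c) ∨ (u = c ∧ v = b) ∨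
        (u = a ∧ v = c) ∨ (u = c ∧ v = a))) := by
  simp only [triangleY, SimpleGraph.sup_adj, SimpleGraph.map_adj, SimpleGraph.deleteEdges_adj,
    SimpleGraph.fromEdgeSet_adj, Set.mem_insert_iff, Set.mem_singleton_iff, Sym2.eq_iff,
    Function.Embedding.some_apply, Option.some.injEq, reduceCtorEq, and_false, false_and,
    or_false, false_or, SimpleGraph.map_adj']
  constructor
  · rintro ⟨-, u', v', ⟨hadj, hmem⟩, hu, hv⟩
    subst hu; subst hv
    refine ⟨hadj, fun hh => hmem ?_⟩
    tauto
  · rintro ⟨hadj, h⟩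
    refine ⟨by simpa using hadj.ne, u, v, ⟨hadj, fun hmem => h ?_⟩, rfl, rfl⟩
    tauto

lemma triangleY_adj_ns {V : Type} (G : SimpleGraph V) (a b c v : V) :
    (triangleY G a b c).Adj none (some v) ↔ (v = a ∨ v = b ∨ v = c) := by
  simp only [triangleY, SimpleGraph.sup_adj, SimpleGraph.map_adj, SimpleGraph.deleteEdges_adj,
    SimpleGraph.fromEdgeSet_adj, Set.mem_insert_iff, Set.mem_singleton_iff, Sym2.eq_iff,
    Function.Embedding.some_apply, Option.some.injEq, reduceCtorEq, and_false, false_and,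
    and_true, true_and, or_false, false_or, ne_eq, not_false_iff, SimpleGraph.map_adj',
    exists_false]

lemma triangleY_adj_sn {V : Type} (G : SimpleGraph V) (a b c u : V) :
    (triangleY G a b c).Adj (some u) none ↔ (u = a ∨ u = b ∨ u = c) := by
  rw [SimpleGraph.adj_comm]; exact triangleY_adj_ns G a b c u

lemma triangleY_adj_nn {V : Type} (G : SimpleGraph V) (a b c : V) :
    ¬ (triangleY G a b c).Adj none none := fun h => (triangleY G a b c).loopless.irrefl _ h

lemma triangleY_swap₁ {V : Type} (G : SimpleGraph V) (a b c : V) :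
    triangleY G a b c = triangleY G b a c := by
  unfold triangleY
  have h1 : ({s(a, b), s(b, c), s(a, c)} : Set (Sym2 V)) = {s(b, a), s(a, c), s(b, c)} := by
    rw [Sym2.eq_swap (a := b) (b := a)]
    ext e
    simp only [Set.mem_insert_iff, Set.mem_singleton_iff]
    tauto
  have h2 : ({s((none : Option V), some a), s(none, some b), s(none, some c)} :
      Set (Sym2 (Option V))) = {s(none, some b), s(none, some a), s(none, some c)} := by
    ext e
    simp only [Set.mem_insert_iff, Set.mem_singleton_iff]
    tauto
  rw [h1, h2]

lemma triangleY_swap₂ {V : Type} (G : SimpleGraph V) (a b c : V) :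
    triangleY G a b c = triangleY G a c b := by
  unfold triangleY
  have h1 : ({s(a, b), s(b, c), s(a, c)} : Set (Sym2 V)) = {s(a, c), s(c, b), s(a, b)} := by
    rw [Sym2.eq_swap (a := c) (b := b)]
    ext e
    simp only [Set.mem_insert_iff, Set.mem_singleton_iff]
    tauto
  have h2 : ({s((none : Option V), some a), s(none, some b), s(none, some c)} :
      Set (Sym2 (Option V))) = {s(none, some a), s(none, some c), s(none, some b)} := by
    ext e
    simp only [Set.mem_insert_iff, Set.mem_singleton_iff]
    tauto
  rw [h1, h2]
/-- `P` consists of a copy of `M` (via `f`) together with isolated vertices. -/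
def OccFun {V : Type} {n : ℕ} (M : SimpleGraph (Fin n)) (P : SimpleGraph V)
    (f : Fin n → V) : Prop :=
  Function.Injective f ∧ (∀ x y, M.Adj x y ↔ P.Adj (f x) (f y)) ∧
    ∀ ⦃v w⦄, P.Adj v w → ∃ x, f x = v

def Occ {V : Type} {n : ℕ} (M : SimpleGraph (Fin n)) (P : SimpleGraph V) : Prop :=
  ∃ f, OccFun M P f

lemma occ_iso {V W : Type} {n : ℕ} {M : SimpleGraph (Fin n)} {P : SimpleGraph V}
    {Q : SimpleGraph W} (e : P ≃g Q) (h : Occ M P) : Occ M Q := by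
  obtain ⟨f, finj, fiff, fcov⟩ := h
  refine ⟨fun x => e (f x), fun x y hxy => finj (e.toEquiv.injective hxy), fun x y => ?_, ?_⟩
  · rw [fiff x y]
    exact (e.map_adj_iff).symm
  · intro v w hvw
    have hP : P.Adj (e.symm v) (e.symm w) := e.symm.map_adj_iff.mpr hvw
    obtain ⟨x, hx⟩ := fcov hP
    refine ⟨x, ?_⟩
    show e (f x) = v
    rw [hx]; simp

lemma occ_deltaY {V : Type} {P : SimpleGraph V} {n m : ℕ} {Mi : SimpleGraph (Fin n)}
    [DecidableRel Mi.Adj] {Mj : SimpleGraph (Fin m)} (hm : m = n + 1)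
    {f : Fin n → V} (hf : OccFun Mi P f) {a b c : Fin n} {τ : Fin m → Option (Fin n)}
    (hd : DYC Mi Mj a b c τ) : Occ Mj (triangleY P (f a) (f b) (f c)) := by
  obtain ⟨finj, fiff, fcov⟩ := hf
  obtain ⟨τinj', hiff⟩ := hd
  have τinj : Function.Injective τ := fun x y h => τinj' x y h
  have τsurj : Function.Surjective τ := by
    refine ((Fintype.bijective_iff_injective_and_card τ).2 ⟨τinj, ?_⟩).2
    simp [hm]
  have fe : ∀ x y : Fin n, f x = f y ↔ x = y :=
    fun x y => ⟨fun h => finj h, fun h => h ▸ rfl⟩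
  have bridge : ∀ o₁ o₂ : Option (Fin n),
      (triangleY P (f a) (f b) (f c)).Adj (Option.map f o₁) (Option.map f o₂) ↔
        tyb Mi a b c o₁ o₂ = true := by
    intro o₁ o₂
    match o₁, o₂ with
    | some u, some v =>
      show (triangleY P (f a) (f b) (f c)).Adj (some (f u)) (some (f v)) ↔ _
      rw [triangleY_adj_ss]
      simp only [tyb, Bool.and_eq_true, decide_eq_true_eq, Bool.not_eq_true',
        decide_eq_false_iff_not, fe, ← fiff u v]
    | some u, none =>
      show (triangleY P (f a) (f b) (f c)).Adj (some (f u)) none ↔ _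
      rw [triangleY_adj_sn]
      simp only [tyb, decide_eq_true_eq, fe]
    | none, some v =>
      show (triangleY P (f a) (f b) (f c)).Adj none (some (f v)) ↔ _
      rw [triangleY_adj_ns]
      simp only [tyb, decide_eq_true_eq, fe]
    | none, none =>
      show (triangleY P (f a) (f b) (f c)).Adj none none ↔ _
      simp only [tyb]
      exact iff_of_false (triangleY_adj_nn _ _ _ _) (by simp)
  refine ⟨fun x => Option.map f (τ x), ?_, ?_, ?_⟩
  · exact fun x y h => τinj ((Option.map_injective finj) h)
  · intro x y
    exact (hiff x y).trans (bridge (τ x) (τ y)).symm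
  · intro v w hvw
    have hv : ∃ o : Option (Fin n), Option.map f o = v := by
      match v, w with
      | none, _ => exact ⟨none, rfl⟩
      | some u, none =>
        rw [triangleY_adj_sn] at hvw
        rcases hvw with h | h | h
        · exact ⟨some a, by rw [h]; rfl⟩
        · exact ⟨some b, by rw [h]; rfl⟩
        · exact ⟨some c, by rw [h]; rfl⟩
      | some u, some w' =>
        rw [triangleY_adj_ss] at hvw
        obtain ⟨x, hx⟩ := fcov hvw.1
        exact ⟨some x, by rw [← hx]; rfl⟩
    obtain ⟨o, ho⟩ := hv
    obtain ⟨x, hx⟩ := τsurj o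
    refine ⟨x, ?_⟩
    show Option.map f (τ x) = v
    rw [hx, ho]
lemma occ_yDelta {V : Type} {P : SimpleGraph V} {a b c : V}
    (hab : P.Adj a b) (hbc : P.Adj b c) (hac : P.Adj a c)
    {n m : ℕ} {Mi : SimpleGraph (Fin n)} {Mj : SimpleGraph (Fin m)} (hm : m + 1 = n)
    {f : Fin n → Option V} (hf : OccFun Mi (triangleY P a b c) f)
    {v₀ : Fin n} (hv₀ : f v₀ = none) {g : Fin m → Fin n} (hy : YDC Mi Mj v₀ g) : Occ Mj P := by
  obtain ⟨finj, fiff, fcov⟩ := hf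
  obtain ⟨ginj', gne, giff⟩ := hy
  have ginj : Function.Injective g := fun x y h => ginj' x y h
  have hsome : ∀ t, ∃ u, f (g t) = some u := by
    intro t
    cases h : f (g t) with
    | none => exact absurd (finj (h.trans hv₀.symm)) (gne t)
    | some u => exact ⟨u, rfl⟩
  choose F hF using hsome
  -- adjacency characterization of P in terms of the ∇Y graph
  have padj : ∀ u w : V, P.Adj u w ↔
      ((triangleY P a b c).Adj (some u) (some w) ∨
        ((u = a ∨ u = b ∨ u = c) ∧ (w = a ∨ w = b ∨ w = c) ∧ u ≠ w)) := by
    intro u w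
    rw [triangleY_adj_ss]
    constructor
    · intro h
      by_cases hmem : (u = a ∧ w = b) ∨ (u = b ∧ w = a) ∨ (u = b ∧ w = c) ∨ (u = c ∧ w = b) ∨
          (u = a ∧ w = c) ∨ (u = c ∧ w = a)
      · refine Or.inr ⟨?_, ?_, h.ne⟩ <;> tauto
      · exact Or.inl ⟨h, hmem⟩
    · rintro (⟨h, -⟩ | ⟨hu, hw, hne⟩)
      · exact h
      · rcases hu with rfl | rfl | rfl <;> rcases hw with rfl | rfl | rfl <;>
          first
            | exact absurd rfl hne
            | exact hab | exact hac | exact hbc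
            | exact hab.symm | exact hac.symm | exact hbc.symm
  -- neighbors of v₀
  have nbr : ∀ x : Fin n, Mi.Adj x v₀ ↔ (f x = some a ∨ f x = some b ∨ f x = some c) := by
    intro x
    rw [fiff x v₀, hv₀]
    cases hfx : f x with
    | none =>
      refine iff_of_false (triangleY_adj_nn _ _ _ _) ?_
      simp
    | some u =>
      rw [triangleY_adj_sn]
      simp only [Option.some.injEq]
  -- range of g is everything except v₀
  have gsurj : ∀ x : Fin n, x ≠ v₀ → ∃ t, g t = x := by
    intro x hx
    have himg : Finset.univ.image g ⊆ Finset.univ.erase v₀ := by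
      intro y hy
      simp only [Finset.mem_image] at hy
      obtain ⟨t, -, rfl⟩ := hy
      exact Finset.mem_erase.mpr ⟨gne t, Finset.mem_univ _⟩
    have hcard : (Finset.univ.erase v₀).card ≤ (Finset.univ.image g).card := by
      rw [Finset.card_image_of_injective _ ginj, Finset.card_erase_of_mem (Finset.mem_univ _)]
      simp [← hm]
    have := Finset.eq_of_subset_of_card_le himg hcard
    have hx' : x ∈ Finset.univ.erase v₀ := Finset.mem_erase.mpr ⟨hx, Finset.mem_univ _⟩
    rw [← this] at hx'
    simpa using Finset.mem_image.mp hx'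
  refine ⟨F, ?_, ?_, ?_⟩
  · intro t₁ t₂ h
    apply ginj (finj ?_)
    rw [hF t₁, hF t₂, h]
  · intro x y
    rw [giff x y, padj (F x) (F y)]
    have h1 : Mi.Adj (g x) (g y) ↔ (triangleY P a b c).Adj (some (F x)) (some (F y)) := by
      rw [fiff (g x) (g y), hF x, hF y]
    have h2 : ∀ t, Mi.Adj v₀ (g t) ↔ (F t = a ∨ F t = b ∨ F t = c) := by
      intro t
      rw [SimpleGraph.adj_comm, nbr (g t), hF t]
      simp only [Option.some.injEq]
    have h3 : g x ≠ g y ↔ F x ≠ F y := by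
      constructor
      · intro h hFeq
        exact h (finj (by rw [hF x, hF y, hFeq]))
      · intro h hgeq
        exact h (Option.some.inj (by rw [← hF x, ← hF y, hgeq]))
    rw [h1, h2 x, h2 y, h3]
  · intro u w hP
    rw [padj u w] at hP
    have getpre : ∀ z : V, (∃ x : Fin n, f x = some z) → ∃ t, F t = z := by
      rintro z ⟨x, hx⟩
      have hxv : x ≠ v₀ := fun h => by rw [h, hv₀] at hx; exact nomatch hx
      obtain ⟨t, ht⟩ := gsurj x hxv
      refine ⟨t, ?_⟩
      have := hF t
      rw [ht, hx] at this
      exact (Option.some.inj this).symm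
    rcases hP with h | ⟨hu, -, -⟩
    · exact getpre u (fcov h)
    · apply getpre
      rcases hu with rfl | rfl | rfl
      · exact fcov ((triangleY_adj_sn P _ _ _ _).mpr (Or.inl rfl))
      · exact fcov ((triangleY_adj_sn P _ _ _ _).mpr (Or.inr (Or.inl rfl)))
      · exact fcov ((triangleY_adj_sn P _ _ _ _).mpr (Or.inr (Or.inr rfl)))
lemma occ_triangle_sorted {V : Type} {G : SimpleGraph V} {a b c : V}
    (hab : G.Adj a b) (hbc : G.Adj b c) (hac : G.Adj a c)
    {n : ℕ} {Mi : SimpleGraph (Fin n)} (hocc : Occ Mi G) :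
    ∃ (f : Fin n → V) (x y z : Fin n), OccFun Mi G f ∧ x < y ∧ y < z ∧
      Mi.Adj x y ∧ Mi.Adj y z ∧ Mi.Adj x z ∧
      triangleY G a b c = triangleY G (f x) (f y) (f z) := by
  obtain ⟨f, hf⟩ := hocc
  obtain ⟨finj, fiff, fcov⟩ := hf
  obtain ⟨a', ha⟩ := fcov hab
  obtain ⟨b', hb⟩ := fcov hab.symm
  obtain ⟨c', hc⟩ := fcov hac.symm
  have hA : Mi.Adj a' b' := (fiff _ _).mpr (by rw [ha, hb]; exact hab)
  have hB : Mi.Adj b' c' := (fiff _ _).mpr (by rw [hb, hc]; exact hbc)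
  have hC : Mi.Adj a' c' := (fiff _ _).mpr (by rw [ha, hc]; exact hac)
  subst ha; subst hb; subst hc
  rcases lt_trichotomy a' b' with h1 | h1 | h1
  · rcases lt_trichotomy b' c' with h2 | h2 | h2
    · exact ⟨f, a', b', c', ⟨finj, fiff, fcov⟩, h1, h2, hA, hB, hC, rfl⟩
    · exact absurd h2 hB.ne
    · rcases lt_trichotomy a' c' with h3 | h3 | h3
      · exact ⟨f, a', c', b', ⟨finj, fiff, fcov⟩, h3, h2, hC, hB.symm, hA,
          triangleY_swap₂ G _ _ _⟩
      · exact absurd h3 hC.ne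
      · exact ⟨f, c', a', b', ⟨finj, fiff, fcov⟩, h3, h1, hC.symm, hA, hB.symm,
          (triangleY_swap₂ G _ _ _).trans (triangleY_swap₁ G _ _ _)⟩
  · exact absurd h1 hA.ne
  · rcases lt_trichotomy a' c' with h2 | h2 | h2
    · exact ⟨f, b', a', c', ⟨finj, fiff, fcov⟩, h1, h2, hA.symm, hC, hB,
        triangleY_swap₁ G _ _ _⟩
    · exact absurd h2 hC.ne
    · rcases lt_trichotomy b' c' with h3 | h3 | h3
      · exact ⟨f, b', c', a', ⟨finj, fiff, fcov⟩, h3, h2, hB, hC.symm, hA.symm,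
          (triangleY_swap₁ G _ _ _).trans (triangleY_swap₂ G _ _ _)⟩
      · exact absurd h3 hB.ne
      · exact ⟨f, c', b', a', ⟨finj, fiff, fcov⟩, h3, h1, hB.symm, hA.symm, hC.symm,
          ((triangleY_swap₁ G _ _ _).trans (triangleY_swap₂ G _ _ _)).trans
            (triangleY_swap₁ G _ _ _)⟩

lemma occ_none_data {V : Type} {G : SimpleGraph V} {a b c : V}
    (hab : G.Adj a b) (hbc : G.Adj b c) (hac : G.Adj a c)
    {n : ℕ} {Mi : SimpleGraph (Fin n)} (hocc : Occ Mi (triangleY G a b c)) :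
    ∃ (f : Fin n → Option V) (v₀ p q r : Fin n), OccFun Mi (triangleY G a b c) f ∧
      f v₀ = none ∧ p < q ∧ q < r ∧ (∀ x, Mi.Adj x v₀ ↔ (x = p ∨ x = q ∨ x = r)) := by
  obtain ⟨f, hf⟩ := hocc
  obtain ⟨finj, fiff, fcov⟩ := hf
  obtain ⟨v₀, hv₀⟩ := fcov ((triangleY_adj_ns G a b c a).mpr (Or.inl rfl))
  obtain ⟨xa, hxa⟩ := fcov ((triangleY_adj_sn G a b c a).mpr (Or.inl rfl))
  obtain ⟨xb, hxb⟩ := fcov ((triangleY_adj_sn G a b c b).mpr (Or.inr (Or.inl rfl)))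
  obtain ⟨xc, hxc⟩ := fcov ((triangleY_adj_sn G a b c c).mpr (Or.inr (Or.inr rfl)))
  have nbr : ∀ x, Mi.Adj x v₀ ↔ (x = xa ∨ x = xb ∨ x = xc) := by
    intro x
    rw [fiff x v₀, hv₀]
    cases hfx : f x with
    | none =>
      refine iff_of_false (triangleY_adj_nn _ _ _ _) ?_
      rintro (rfl | rfl | rfl)
      · rw [hfx] at hxa; exact nomatch hxa
      · rw [hfx] at hxb; exact nomatch hxb
      · rw [hfx] at hxc; exact nomatch hxc
    | some u =>
      rw [triangleY_adj_sn]
      constructor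
      · rintro (rfl | rfl | rfl)
        · exact Or.inl (finj (hfx.trans hxa.symm))
        · exact Or.inr (Or.inl (finj (hfx.trans hxb.symm)))
        · exact Or.inr (Or.inr (finj (hfx.trans hxc.symm)))
      · rintro (rfl | rfl | rfl)
        · rw [hfx] at hxa; exact Or.inl (Option.some.inj hxa)
        · rw [hfx] at hxb; exact Or.inr (Or.inl (Option.some.inj hxb))
        · rw [hfx] at hxc; exact Or.inr (Or.inr (Option.some.inj hxc))
  have dab : xa ≠ xb := fun h => hab.ne (Option.some.inj (((h ▸ hxa) : f xb = some a).symm.trans hxb))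
  have dbc : xb ≠ xc := fun h => hbc.ne (Option.some.inj (((h ▸ hxb) : f xc = some b).symm.trans hxc))
  have dac : xa ≠ xc := fun h => hac.ne (Option.some.inj (((h ▸ hxa) : f xc = some a).symm.trans hxc))
  have reorder : ∀ p q r : Fin n,
      ((p = xa ∨ p = xb ∨ p = xc) ∧ (q = xa ∨ q = xb ∨ q = xc) ∧ (r = xa ∨ r = xb ∨ r = xc) ∧
        (∀ x, (x = xa ∨ x = xb ∨ x = xc) ↔ (x = p ∨ x = q ∨ x = r))) →
      ∀ x, Mi.Adj x v₀ ↔ (x = p ∨ x = q ∨ x = r) :=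
    fun p q r h x => (nbr x).trans (h.2.2.2 x)
  rcases lt_trichotomy xa xb with h1 | h1 | h1
  · rcases lt_trichotomy xb xc with h2 | h2 | h2
    · exact ⟨f, v₀, xa, xb, xc, ⟨finj, fiff, fcov⟩, hv₀, h1, h2, nbr⟩
    · exact absurd h2 dbc
    · rcases lt_trichotomy xa xc with h3 | h3 | h3
      · exact ⟨f, v₀, xa, xc, xb, ⟨finj, fiff, fcov⟩, hv₀, h3, h2,
          fun x => (nbr x).trans (by tauto)⟩
      · exact absurd h3 dac
      · exact ⟨f, v₀, xc, xa, xb, ⟨finj, fiff, fcov⟩, hv₀, h3, h1,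
          fun x => (nbr x).trans (by tauto)⟩
  · exact absurd h1 dab
  · rcases lt_trichotomy xa xc with h2 | h2 | h2
    · exact ⟨f, v₀, xb, xa, xc, ⟨finj, fiff, fcov⟩, hv₀, h1, h2,
        fun x => (nbr x).trans (by tauto)⟩
    · exact absurd h2 dac
    · rcases lt_trichotomy xb xc with h3 | h3 | h3
      · exact ⟨f, v₀, xb, xc, xa, ⟨finj, fiff, fcov⟩, hv₀, h3, h2,
          fun x => (nbr x).trans (by tauto)⟩
      · exact absurd h3 dbc
      · exact ⟨f, v₀, xc, xb, xa, ⟨finj, fiff, fcov⟩, hv₀, h3, h1,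
          fun x => (nbr x).trans (by tauto)⟩
/-! ### Minor machinery -/

instance decFromEdgeSetSingleton {V : Type} [DecidableEq V] (a b : V) :
    DecidableRel (SimpleGraph.fromEdgeSet {s(a, b)}).Adj := fun x y =>
  decidable_of_iff (s(x, y) = s(a, b) ∧ x ≠ y)
    (by rw [SimpleGraph.fromEdgeSet_adj]; simp)

instance decAddEdge {V : Type} [DecidableEq V] (G : SimpleGraph V) [DecidableRel G.Adj]
    (a b : V) : DecidableRel (addEdge G a b).Adj := fun x y =>
  decidable_of_iff (G.Adj x y ∨ (s(x, y) = s(a, b) ∧ x ≠ y))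
    (by rw [addEdge, SimpleGraph.sup_adj, SimpleGraph.fromEdgeSet_adj]; simp)

/-- The 7-vertex graph: K₇ minus the edges 05, 56, 16. -/
def AG : Fin 7 → Fin 7 → Bool :=
  ![![false, true, true, true, true, false, true],
    ![true, false, true, true, true, true, false],
    ![true, true, false, true, true, true, true],
    ![true, true, true, false, true, true, true],
    ![true, true, true, true, false, true, true],
    ![false, true, true, true, true, false, false],
    ![true, false, true, true, true, false, false]]

abbrev Gr : SimpleGraph (Fin 7) := ofB AG (by decide) (by decide)

abbrev K6e : SimpleGraph (Fin 6) := (⊤ : SimpleGraph (Fin 6)).deleteEdges {s((0 : Fin 6), 1)}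

instance : DecidableRel K6e.Adj := fun x y =>
  decidable_of_iff (x ≠ y ∧ ¬ s(x, y) = s((0 : Fin 6), 1))
    (by rw [SimpleGraph.deleteEdges_adj]; simp)

lemma induce_connected_singleton {V : Type} (X : SimpleGraph V) (s : Set V) (a : V)
    (h : s = {a}) : (X.induce s).Connected := by
  subst h
  haveI : Nonempty ↥({a} : Set V) := ⟨⟨a, rfl⟩⟩
  refine SimpleGraph.Connected.mk (fun x y => ?_)
  have hx : x = ⟨a, rfl⟩ := Subtype.ext x.2
  have hy : y = ⟨a, rfl⟩ := Subtype.ext y.2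
  rw [hx, hy]

lemma induce_connected_pair {V : Type} (X : SimpleGraph V) (s : Set V) (a b : V)
    (h : s = {a, b}) (hadj : X.Adj a b) : (X.induce s).Connected := by
  subst h
  have ha : a ∈ ({a, b} : Set V) := Or.inl rfl
  have hb : b ∈ ({a, b} : Set V) := Or.inr rfl
  have hre : (X.induce {a, b}).Reachable ⟨a, ha⟩ ⟨b, hb⟩ :=
    SimpleGraph.Adj.reachable (by exact hadj)
  have hcase : ∀ z : ↥({a, b} : Set V), z = ⟨a, ha⟩ ∨ z = ⟨b, hb⟩ := fun z =>
    z.2.imp (fun h => Subtype.ext h) (fun h => Subtype.ext h)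
  haveI : Nonempty ↥({a, b} : Set V) := ⟨⟨a, ha⟩⟩
  refine SimpleGraph.Connected.mk (fun x y => ?_)
  rcases hcase x with rfl | rfl <;> rcases hcase y with rfl | rfl
  · exact SimpleGraph.Reachable.refl _
  · exact hre
  · exact hre.symm
  · exact SimpleGraph.Reachable.refl _

lemma adj_of_induce_connected_pair {V : Type} (X : SimpleGraph V) (u v : V) (huv : u ≠ v)
    (h : (X.induce {u, v}).Connected) : X.Adj u v := by
  have hu : u ∈ ({u, v} : Set V) := Or.inl rfl
  have hv : v ∈ ({u, v} : Set V) := Or.inr rfl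
  obtain ⟨w⟩ := h.preconnected ⟨u, hu⟩ ⟨v, hv⟩
  cases w with
  | nil => exact absurd rfl huv
  | @cons _ z _ h' w' =>
    rcases (z.2 : z.1 = u ∨ z.1 = v) with hz | hz
    · exfalso
      have : X.Adj u z.1 := h'
      rw [hz] at this
      exact X.loopless.irrefl u this
    · have : X.Adj u z.1 := h'
      rwa [hz] at this

lemma occ_isMinor {V W : Type} {n : ℕ} {M : SimpleGraph (Fin n)} {P : SimpleGraph W}
    (hocc : Occ M P) {X : SimpleGraph V} (hmin : IsMinor P X) : IsMinor M X := by
  obtain ⟨g, ginj, giff, -⟩ := hocc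
  obtain ⟨f, hne, hconn, hdisj, hadj⟩ := hmin
  exact ⟨fun x => f (g x), fun x => hne _, fun x => hconn _,
    fun x y hxy => hdisj (fun h => hxy (ginj h)), fun x y hxy => hadj ((giff x y).mp hxy)⟩

lemma minor_reps {W V : Type} {H : SimpleGraph W} {X : SimpleGraph V} (h : IsMinor H X) :
    ∃ (f : W → Set V) (r : W → V),
      (∀ w, (X.induce (f w)).Connected) ∧
      (Pairwise fun w₁ w₂ => Disjoint (f w₁) (f w₂)) ∧
      (∀ ⦃w₁ w₂⦄, H.Adj w₁ w₂ → ∃ v₁ ∈ f w₁, ∃ v₂ ∈ f w₂, X.Adj v₁ v₂) ∧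
      (∀ w, r w ∈ f w) ∧ Function.Injective r := by
  obtain ⟨f, hne, hconn, hdisj, hadj⟩ := h
  choose r hr using hne
  refine ⟨f, r, hconn, hdisj, hadj, hr, ?_⟩
  intro x y hxy
  by_contra hne'
  exact Set.disjoint_left.mp (hdisj hne') (hr x) (hxy ▸ hr y)

lemma minor_card_le {n N : ℕ} {H : SimpleGraph (Fin n)} {X : SimpleGraph (Fin N)}
    (h : IsMinor H X) : n ≤ N := by
  obtain ⟨f, r, -, -, -, -, rinj⟩ := minor_reps h
  simpa using Fintype.card_le_of_injective r rinj

lemma minor_eq_card {N : ℕ} {H X : SimpleGraph (Fin N)} (h : IsMinor H X) :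
    ∃ r : Fin N → Fin N, Function.Bijective r ∧ ∀ ⦃x y⦄, H.Adj x y → X.Adj (r x) (r y) := by
  obtain ⟨f, r, hconn, hdisj, hadj, hr, rinj⟩ := minor_reps h
  have rbij : Function.Bijective r :=
    (Fintype.bijective_iff_injective_and_card r).2 ⟨rinj, rfl⟩
  have hsingle : ∀ w v, v ∈ f w → v = r w := by
    intro w v hv
    obtain ⟨w', hw'⟩ := rbij.2 v
    by_cases hww : w' = w
    · rw [← hw', hww]
    · exact absurd hv (Set.disjoint_left.mp (hdisj hww) (hw' ▸ hr w'))
  refine ⟨r, rbij, fun x y hxy => ?_⟩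
  obtain ⟨v₁, hv₁, v₂, hv₂, hadj'⟩ := hadj hxy
  rwa [hsingle x v₁ hv₁, hsingle y v₂ hv₂] at hadj'
lemma minor_k6_structure {X : SimpleGraph (Fin 7)} (h : IsMinor M0 X) :
    (∃ r : Fin 6 → Fin 7, Function.Injective r ∧ ∀ x y : Fin 6, x ≠ y → X.Adj (r x) (r y)) ∨
    (∃ u v : Fin 7, u ≠ v ∧ X.Adj u v ∧
      (∀ s, s ≠ u → s ≠ v → (X.Adj s u ∨ X.Adj s v)) ∧
      (∀ s t, s ≠ u → s ≠ v → t ≠ u → t ≠ v → s ≠ t → X.Adj s t)) := by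
  have hM0 : ∀ x y : Fin 6, x ≠ y → M0.Adj x y := by decide
  obtain ⟨f, r, hconn, hdisj, hadj, hr, rinj⟩ := minor_reps h
  set F : Fin 6 → Finset (Fin 7) := fun w => (Set.toFinite (f w)).toFinset with hF
  have hmemF : ∀ w v, v ∈ F w ↔ v ∈ f w := fun w v => Set.Finite.mem_toFinset _
  have hFdisj : ∀ (w₁ w₂ : Fin 6), w₁ ≠ w₂ → Disjoint (F w₁) (F w₂) := by
    intro w₁ w₂ hne
    rw [Finset.disjoint_left]
    intro a ha hb
    exact Set.disjoint_left.mp (hdisj hne) ((hmemF _ _).mp ha) ((hmemF _ _).mp hb)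
  have hcard1 : ∀ w, 1 ≤ (F w).card := by
    intro w
    rw [Nat.one_le_iff_ne_zero, ← Nat.pos_iff_ne_zero, Finset.card_pos]
    exact ⟨r w, (hmemF _ _).mpr (hr w)⟩
  have hsum : ∑ w : Fin 6, (F w).card ≤ 7 := by
    rw [← Finset.card_biUnion (fun x _ y _ hxy => hFdisj x y hxy)]
    simpa using Finset.card_le_univ (Finset.univ.biUnion F)
  have hle2 : ∀ w, (F w).card ≤ 2 := by
    intro w
    by_contra hgt
    push_neg at hgt
    have h1 : (F w).card + ∑ x ∈ Finset.univ.erase w, (F x).card = ∑ x : Fin 6, (F x).card :=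
      Finset.add_sum_erase Finset.univ (fun x => (F x).card) (Finset.mem_univ w)
    have h2 : (Finset.univ.erase w).card • 1 ≤ ∑ x ∈ Finset.univ.erase w, (F x).card :=
      Finset.card_nsmul_le_sum _ _ _ (fun x _ => hcard1 x)
    have h3 : (Finset.univ.erase w).card = 5 := by
      rw [Finset.card_erase_of_mem (Finset.mem_univ w)]
      simp
    rw [h3, smul_eq_mul, mul_one] at h2
    omega
  have hsingle : ∀ w, (F w).card = 1 → f w = {r w} := by
    intro w hw
    obtain ⟨a, ha⟩ := Finset.card_eq_one.mp hw
    have hra : r w = a := by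
      have := (hmemF w (r w)).mpr (hr w)
      rw [ha] at this
      simpa using this
    ext z
    simp only [Set.mem_singleton_iff]
    constructor
    · intro hz
      have := (hmemF w z).mpr hz
      rw [ha] at this
      simp only [Finset.mem_singleton] at this
      rw [this, hra]
    · rintro rfl
      exact hr w
  by_cases hex : ∃ w₀, (F w₀).card = 2
  · -- one branch set of size two
    obtain ⟨w₀, hw₀⟩ := hex
    obtain ⟨u, v, huv, hFw₀⟩ := Finset.card_eq_two.mp hw₀
    have hfw₀ : f w₀ = {u, v} := by
      ext z
      rw [← hmemF w₀ z, hFw₀]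
      simp
    have hXuv : X.Adj u v := by
      apply adj_of_induce_connected_pair X u v huv
      rw [← hfw₀]
      exact hconn w₀
    -- every other branch set is a singleton
    have hone : ∀ w, w ≠ w₀ → (F w).card = 1 := by
      intro w hw
      have h1 : (F w₀).card + ∑ x ∈ Finset.univ.erase w₀, (F x).card = ∑ x : Fin 6, (F x).card :=
        Finset.add_sum_erase Finset.univ (fun x => (F x).card) (Finset.mem_univ w₀)
      have hmem : w ∈ Finset.univ.erase w₀ := Finset.mem_erase.mpr ⟨hw, Finset.mem_univ w⟩
      have h2 : (F w).card + ∑ x ∈ (Finset.univ.erase w₀).erase w, (F x).card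
          = ∑ x ∈ Finset.univ.erase w₀, (F x).card := Finset.add_sum_erase _ (fun x => (F x).card) hmem
      have h3 : ((Finset.univ.erase w₀).erase w).card • 1
          ≤ ∑ x ∈ (Finset.univ.erase w₀).erase w, (F x).card :=
        Finset.card_nsmul_le_sum _ _ _ (fun x _ => hcard1 x)
      have h4 : ((Finset.univ.erase w₀).erase w).card = 4 := by
        rw [Finset.card_erase_of_mem hmem, Finset.card_erase_of_mem (Finset.mem_univ w₀)]
        simp
      rw [h4, smul_eq_mul, mul_one] at h3
      have := hcard1 w
      omega
    -- the union of all branch sets is everything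
    have hcover : ∀ s : Fin 7, ∃ w, s ∈ f w := by
      intro s
      have h7 : ∑ w : Fin 6, (F w).card = 7 := by
        have h1 : (F w₀).card + ∑ x ∈ Finset.univ.erase w₀, (F x).card = ∑ x : Fin 6, (F x).card :=
          Finset.add_sum_erase Finset.univ (fun x => (F x).card) (Finset.mem_univ w₀)
        have h2 : (Finset.univ.erase w₀).card • 1 ≤ ∑ x ∈ Finset.univ.erase w₀, (F x).card :=
          Finset.card_nsmul_le_sum _ _ _ (fun x _ => hcard1 x)
        have h3 : (Finset.univ.erase w₀).card = 5 := by
          rw [Finset.card_erase_of_mem (Finset.mem_univ w₀)]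
          simp
        rw [h3, smul_eq_mul, mul_one] at h2
        omega
      have hbU : (Finset.univ.biUnion F).card = 7 := by
        rw [Finset.card_biUnion (fun x _ y _ hxy => hFdisj x y hxy)]
        exact h7
      have : Finset.univ.biUnion F = Finset.univ := Finset.eq_univ_of_card _ (by simpa using hbU)
      have hs : s ∈ Finset.univ.biUnion F := this ▸ Finset.mem_univ s
      obtain ⟨w, -, hw⟩ := Finset.mem_biUnion.mp hs
      exact ⟨w, (hmemF w s).mp hw⟩
    -- representation of outside vertices
    have hrep : ∀ s : Fin 7, s ≠ u → s ≠ v → ∃ w, w ≠ w₀ ∧ f w = {s} := by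
      intro s hsu hsv
      obtain ⟨w, hw⟩ := hcover s
      have hwne : w ≠ w₀ := by
        rintro rfl
        rw [hfw₀] at hw
        rcases hw with h | h
        · exact hsu h
        · exact hsv h
      have hfw : f w = {r w} := hsingle w (hone w hwne)
      have : s = r w := by rw [hfw] at hw; exact hw
      exact ⟨w, hwne, by rw [hfw, ← this]⟩
    refine Or.inr ⟨u, v, huv, hXuv, ?_, ?_⟩
    · intro s hsu hsv
      obtain ⟨w, hwne, hfw⟩ := hrep s hsu hsv
      obtain ⟨v₁, hv₁, v₂, hv₂, hXadj⟩ := hadj (hM0 w w₀ hwne)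
      rw [hfw] at hv₁
      rw [Set.mem_singleton_iff] at hv₁
      subst hv₁
      rw [hfw₀] at hv₂
      rcases hv₂ with h | h
      · subst h; exact Or.inl hXadj
      · rw [Set.mem_singleton_iff] at h; subst h; exact Or.inr hXadj
    · intro s t hsu hsv htu htv hst
      obtain ⟨ws, hwsne, hfws⟩ := hrep s hsu hsv
      obtain ⟨wt, hwtne, hfwt⟩ := hrep t htu htv
      have hwst : ws ≠ wt := by
        rintro rfl
        rw [hfws] at hfwt
        exact hst (Set.singleton_eq_singleton_iff.mp hfwt)
      obtain ⟨v₁, hv₁, v₂, hv₂, hXadj⟩ := hadj (hM0 ws wt hwst)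
      rw [hfws, Set.mem_singleton_iff] at hv₁
      rw [hfwt, Set.mem_singleton_iff] at hv₂
      subst hv₁; subst hv₂
      exact hXadj
  · -- all branch sets are singletons
    push_neg at hex
    have hall : ∀ w, f w = {r w} := by
      intro w
      apply hsingle
      have := hle2 w
      have := hcard1 w
      have := hex w
      omega
    refine Or.inl ⟨r, rinj, fun x y hxy => ?_⟩
    obtain ⟨v₁, hv₁, v₂, hv₂, hXadj⟩ := hadj (hM0 x y hxy)
    rw [hall x, Set.mem_singleton_iff] at hv₁
    rw [hall y, Set.mem_singleton_iff] at hv₂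
    subst hv₁; subst hv₂
    exact hXadj
def INV {V : Type} (P : SimpleGraph V) : Prop :=
  Occ M0 P ∨ Occ M1 P ∨ Occ M2 P ∨ Occ M3 P ∨ Occ M4 P ∨ Occ M5 P ∨ Occ M6 P

theorem family_inv : ∀ {V : Type} {P : SimpleGraph V}, IsPetersenFamily P → INV P := by
  intro V P h
  induction h with
  | k6 =>
    left
    have hM0 : ∀ x y : Fin 6, M0.Adj x y ↔ x ≠ y := by decide
    exact ⟨id, fun x y h => h,
      fun x y => (hM0 x y).trans (SimpleGraph.top_adj _ _).symm,
      fun v w _ => ⟨v, rfl⟩⟩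
  | @deltaY V G a b c hG hab hbc hac ih =>
    rcases ih with h | h | h | h | h | h | h
    · obtain ⟨f, x, y, z, hf, hxy, hyz, hAxy, hAyz, hAxz, heq⟩ :=
        occ_triangle_sorted hab hbc hac h
      rw [heq]
      exact Or.inr (Or.inl (occ_deltaY rfl hf (dy0 x y z hxy hyz hAxy hAyz hAxz)))
    · obtain ⟨f, x, y, z, hf, hxy, hyz, hAxy, hAyz, hAxz, heq⟩ :=
        occ_triangle_sorted hab hbc hac h
      rw [heq]
      rcases dy1 x y z hxy hyz hAxy hAyz hAxz with hd | hd
      · exact Or.inr (Or.inr (Or.inl (occ_deltaY rfl hf hd)))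
      · exact Or.inr (Or.inr (Or.inr (Or.inl (occ_deltaY rfl hf hd))))
    · obtain ⟨f, x, y, z, hf, hxy, hyz, hAxy, hAyz, hAxz, heq⟩ :=
        occ_triangle_sorted hab hbc hac h
      rw [heq]
      exact Or.inr (Or.inr (Or.inr (Or.inr (Or.inl
        (occ_deltaY rfl hf (dy2 x y z hxy hyz hAxy hAyz hAxz))))))
    · obtain ⟨f, x, y, z, hf, hxy, hyz, hAxy, hAyz, hAxz, heq⟩ :=
        occ_triangle_sorted hab hbc hac h
      exact absurd (dy3 x y z hxy hyz hAxy hAyz hAxz) not_false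
    · obtain ⟨f, x, y, z, hf, hxy, hyz, hAxy, hAyz, hAxz, heq⟩ :=
        occ_triangle_sorted hab hbc hac h
      rw [heq]
      exact Or.inr (Or.inr (Or.inr (Or.inr (Or.inr (Or.inr
        (occ_deltaY rfl hf (dy4 x y z hxy hyz hAxy hAyz hAxz)))))))
    · obtain ⟨f, x, y, z, hf, hxy, hyz, hAxy, hAyz, hAxz, heq⟩ :=
        occ_triangle_sorted hab hbc hac h
      rw [heq]
      exact Or.inr (Or.inr (Or.inl (occ_deltaY rfl hf (dy5 x y z hxy hyz hAxy hAyz hAxz))))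
    · obtain ⟨f, x, y, z, hf, hxy, hyz, hAxy, hAyz, hAxz, heq⟩ :=
        occ_triangle_sorted hab hbc hac h
      exact absurd (dy6 x y z hxy hyz hAxy hAyz hAxz) not_false
  | @yDelta V G a b c hG hab hbc hac ih =>
    rcases ih with h | h | h | h | h | h | h
    · obtain ⟨f, v₀, p, q, r, hf, hv₀, hpq, hqr, hnbr⟩ := occ_none_data hab hbc hac h
      exact absurd (yd0 v₀ p q r hpq hqr hnbr) not_false
    · obtain ⟨f, v₀, p, q, r, hf, hv₀, hpq, hqr, hnbr⟩ := occ_none_data hab hbc hac h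
      exact Or.inl (occ_yDelta hab hbc hac rfl hf hv₀ (yd1 v₀ p q r hpq hqr hnbr))
    · obtain ⟨f, v₀, p, q, r, hf, hv₀, hpq, hqr, hnbr⟩ := occ_none_data hab hbc hac h
      rcases yd2 v₀ p q r hpq hqr hnbr with hd | hd
      · exact Or.inr (Or.inl (occ_yDelta hab hbc hac rfl hf hv₀ hd))
      · exact Or.inr (Or.inr (Or.inr (Or.inr (Or.inr (Or.inl
          (occ_yDelta hab hbc hac rfl hf hv₀ hd))))))
    · obtain ⟨f, v₀, p, q, r, hf, hv₀, hpq, hqr, hnbr⟩ := occ_none_data hab hbc hac h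
      exact Or.inr (Or.inl (occ_yDelta hab hbc hac rfl hf hv₀ (yd3 v₀ p q r hpq hqr hnbr)))
    · obtain ⟨f, v₀, p, q, r, hf, hv₀, hpq, hqr, hnbr⟩ := occ_none_data hab hbc hac h
      exact Or.inr (Or.inr (Or.inl (occ_yDelta hab hbc hac rfl hf hv₀
        (yd4 v₀ p q r hpq hqr hnbr))))
    · obtain ⟨f, v₀, p, q, r, hf, hv₀, hpq, hqr, hnbr⟩ := occ_none_data hab hbc hac h
      exact absurd (yd5 v₀ p q r hpq hqr hnbr) not_false
    · obtain ⟨f, v₀, p, q, r, hf, hv₀, hpq, hqr, hnbr⟩ := occ_none_data hab hbc hac h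
      exact Or.inr (Or.inr (Or.inr (Or.inr (Or.inl (occ_yDelta hab hbc hac rfl hf hv₀
        (yd6 v₀ p q r hpq hqr hnbr))))))
  | iso hG e ih =>
    rcases ih with h | h | h | h | h | h | h
    · exact Or.inl (occ_iso e h)
    · exact Or.inr (Or.inl (occ_iso e h))
    · exact Or.inr (Or.inr (Or.inl (occ_iso e h)))
    · exact Or.inr (Or.inr (Or.inr (Or.inl (occ_iso e h))))
    · exact Or.inr (Or.inr (Or.inr (Or.inr (Or.inl (occ_iso e h)))))
    · exact Or.inr (Or.inr (Or.inr (Or.inr (Or.inr (Or.inl (occ_iso e h))))))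
    · exact Or.inr (Or.inr (Or.inr (Or.inr (Or.inr (Or.inr (occ_iso e h))))))
lemma preimage_ne {N : ℕ} {r : Fin N → Fin N} {i j a b : Fin N}
    (h0 : r i = a) (h1 : r j = b) (hab : a ≠ b) : i ≠ j :=
  fun e => hab (by rw [← h0, ← h1, e])

lemma preimage_nadj {N : ℕ} {H X : SimpleGraph (Fin N)} {r : Fin N → Fin N}
    (hadj : ∀ ⦃x y⦄, H.Adj x y → X.Adj (r x) (r y)) {i j a b : Fin N}
    (h0 : r i = a) (h1 : r j = b) (hn : ¬ X.Adj a b) : ¬ H.Adj i j :=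
  fun ha => hn (by rw [← h0, ← h1]; exact hadj ha)

lemma no_K6_minor_Gr : ¬ IsMinor M0 Gr := by
  intro h
  rcases minor_k6_structure h with ⟨r, rinj, hadj⟩ | ⟨u, v, huv, hAdj, hcov, hpair⟩
  · set T := Finset.univ.image r with hT
    have hTcard : T.card = 6 := by
      rw [hT, Finset.card_image_of_injective _ rinj]; simp
    have hsd : (Finset.univ \ T).card = 1 := by
      rw [Finset.card_sdiff_of_subset (Finset.subset_univ T), hTcard]; rfl
    obtain ⟨m, hm⟩ := Finset.card_eq_one.mp hsd
    have hmem : ∀ s : Fin 7, s ≠ m → ∃ x, r x = s := by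
      intro s hs
      by_cases hsT : s ∈ T
      · rw [hT, Finset.mem_image] at hsT
        obtain ⟨x, -, hx⟩ := hsT
        exact ⟨x, hx⟩
      · exfalso
        have : s ∈ Finset.univ \ T := Finset.mem_sdiff.mpr ⟨Finset.mem_univ s, hsT⟩
        rw [hm, Finset.mem_singleton] at this
        exact hs this
    have key : ∀ s t : Fin 7, s ≠ m → t ≠ m → s ≠ t → Gr.Adj s t := by
      intro s t hs ht hst
      obtain ⟨x, hx⟩ := hmem s hs
      obtain ⟨y, hy⟩ := hmem t ht
      have hxy : x ≠ y := fun e => hst (by rw [← hx, ← hy, e])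
      rw [← hx, ← hy]
      exact hadj x y hxy
    have hdec : ∀ m : Fin 7, ∃ s t : Fin 7, s ≠ m ∧ t ≠ m ∧ s ≠ t ∧ ¬ Gr.Adj s t := by decide
    obtain ⟨s, t, hs, ht, hst, hng⟩ := hdec m
    exact hng (key s t hs ht hst)
  · have hdec : ∀ u v : Fin 7, u ≠ v → Gr.Adj u v →
        ((∃ s : Fin 7, s ≠ u ∧ s ≠ v ∧ ¬ Gr.Adj s u ∧ ¬ Gr.Adj s v) ∨
          (∃ s t : Fin 7, s ≠ u ∧ s ≠ v ∧ t ≠ u ∧ t ≠ v ∧ s ≠ t ∧ ¬ Gr.Adj s t)) := by decide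
    rcases hdec u v huv hAdj with ⟨s, hsu, hsv, hn1, hn2⟩ | ⟨s, t, hsu, hsv, htu, htv, hst, hn⟩
    · rcases hcov s hsu hsv with hc | hc
      · exact hn1 hc
      · exact hn2 hc
    · exact hn (hpair s t hsu hsv htu htv hst)

lemma no_M1_minor_Gr : ¬ IsMinor M1 Gr := by
  intro h
  obtain ⟨r, rbij, hadj⟩ := minor_eq_card h
  obtain ⟨i0, h0⟩ := rbij.2 0
  obtain ⟨i5, h5⟩ := rbij.2 5
  obtain ⟨i6, h6⟩ := rbij.2 6
  obtain ⟨i1, h1⟩ := rbij.2 1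
  have d05 : i0 ≠ i5 := preimage_ne h0 h5 (by decide)
  have d56 : i5 ≠ i6 := preimage_ne h5 h6 (by decide)
  have d61 : i6 ≠ i1 := preimage_ne h6 h1 (by decide)
  have d06 : i0 ≠ i6 := preimage_ne h0 h6 (by decide)
  have d01 : i0 ≠ i1 := preimage_ne h0 h1 (by decide)
  have d51 : i5 ≠ i1 := preimage_ne h5 h1 (by decide)
  have n05 : ¬ M1.Adj i0 i5 := preimage_nadj hadj h0 h5 (by decide)
  have n56 : ¬ M1.Adj i5 i6 := preimage_nadj hadj h5 h6 (by decide)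
  have n61 : ¬ M1.Adj i6 i1 := preimage_nadj hadj h6 h1 (by decide)
  have hP4 : ∀ w x y z : Fin 7, w ≠ x → x ≠ y → y ≠ z → w ≠ y → w ≠ z → x ≠ z →
      ¬ M1.Adj w x → ¬ M1.Adj x y → ¬ M1.Adj y z → False := by decide
  exact hP4 i0 i5 i6 i1 d05 d56 d61 d06 d01 d51 n05 n56 n61

lemma no_M5_minor_Gr : ¬ IsMinor M5 Gr := by
  intro h
  obtain ⟨r, rbij, hadj⟩ := minor_eq_card h
  obtain ⟨i0, h0⟩ := rbij.2 0
  obtain ⟨i5, h5⟩ := rbij.2 5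
  obtain ⟨i6, h6⟩ := rbij.2 6
  obtain ⟨i1, h1⟩ := rbij.2 1
  have d05 : i0 ≠ i5 := preimage_ne h0 h5 (by decide)
  have d56 : i5 ≠ i6 := preimage_ne h5 h6 (by decide)
  have d61 : i6 ≠ i1 := preimage_ne h6 h1 (by decide)
  have d06 : i0 ≠ i6 := preimage_ne h0 h6 (by decide)
  have d01 : i0 ≠ i1 := preimage_ne h0 h1 (by decide)
  have d51 : i5 ≠ i1 := preimage_ne h5 h1 (by decide)
  have n05 : ¬ M5.Adj i0 i5 := preimage_nadj hadj h0 h5 (by decide)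
  have n56 : ¬ M5.Adj i5 i6 := preimage_nadj hadj h5 h6 (by decide)
  have n61 : ¬ M5.Adj i6 i1 := preimage_nadj hadj h6 h1 (by decide)
  have hP4 : ∀ w x y z : Fin 7, w ≠ x → x ≠ y → y ≠ z → w ≠ y → w ≠ z → x ≠ z →
      ¬ M5.Adj w x → ¬ M5.Adj x y → ¬ M5.Adj y z → False := by decide
  exact hP4 i0 i5 i6 i1 d05 d56 d61 d06 d01 d51 n05 n56 n61

lemma no_K6_minor_K6e : ¬ IsMinor M0 K6e := by
  intro h
  obtain ⟨r, rbij, hadj⟩ := minor_eq_card h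
  obtain ⟨i0, h0⟩ := rbij.2 0
  obtain ⟨i1, h1⟩ := rbij.2 1
  have d01 : i0 ≠ i1 := preimage_ne h0 h1 (by decide)
  have hM0 : ∀ x y : Fin 6, x ≠ y → M0.Adj x y := by decide
  exact preimage_nadj hadj h0 h1 (by decide) (hM0 i0 i1 d01)

theorem linkless_Gr : IsLinkless Gr := by
  intro W P hP hmin
  rcases family_inv hP with h | h | h | h | h | h | h
  · exact no_K6_minor_Gr (occ_isMinor h hmin)
  · exact no_M1_minor_Gr (occ_isMinor h hmin)
  · exact absurd (minor_card_le (occ_isMinor h hmin)) (by omega)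
  · exact absurd (minor_card_le (occ_isMinor h hmin)) (by omega)
  · exact absurd (minor_card_le (occ_isMinor h hmin)) (by omega)
  · exact no_M5_minor_Gr (occ_isMinor h hmin)
  · exact absurd (minor_card_le (occ_isMinor h hmin)) (by omega)

theorem linkless_K6e : IsLinkless K6e := by
  intro W P hP hmin
  rcases family_inv hP with h | h | h | h | h | h | h
  · exact no_K6_minor_K6e (occ_isMinor h hmin)
  · exact absurd (minor_card_le (occ_isMinor h hmin)) (by omega)
  · exact absurd (minor_card_le (occ_isMinor h hmin)) (by omega)
  · exact absurd (minor_card_le (occ_isMinor h hmin)) (by omega)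
  · exact absurd (minor_card_le (occ_isMinor h hmin)) (by omega)
  · exact absurd (minor_card_le (occ_isMinor h hmin)) (by omega)
  · exact absurd (minor_card_le (occ_isMinor h hmin)) (by omega)
/-! ### Positive constructions and transfer lemmas -/

lemma minor_of_emb {n N : ℕ} (M : SimpleGraph (Fin n)) (X : SimpleGraph (Fin N))
    (e : Fin n → Fin N) (hinj : Function.Injective e)
    (hadj : ∀ x y, M.Adj x y → X.Adj (e x) (e y)) : IsMinor M X :=
  ⟨fun w => {e w}, fun w => ⟨e w, rfl⟩, fun w => induce_connected_singleton X _ _ rfl,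
   fun x y hxy => Set.disjoint_singleton.mpr (fun h => hxy (hinj h)),
   fun x y hxy => ⟨e x, rfl, e y, rfl, hadj x y hxy⟩⟩

lemma not_linkless_of_K6 {V : Type} {X : SimpleGraph V}
    (h : IsMinor (⊤ : SimpleGraph (Fin 6)) X) : ¬ IsLinkless X :=
  fun hL => hL _ IsPetersenFamily.k6 h

/-- Transport a minor along an isomorphism of the host graph. -/
lemma isMinor_congr {U V W : Type} {P : SimpleGraph U} {A : SimpleGraph V} {B : SimpleGraph W}
    (e : A ≃g B) (h : IsMinor P A) : IsMinor P B := by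
  obtain ⟨f, hne, hconn, hdisj, hadj⟩ := h
  refine ⟨fun w => ⇑e '' f w, fun w => (hne w).image e, fun w => ?_,
    fun x y hxy => (Set.disjoint_image_iff e.injective).mpr (hdisj hxy), ?_⟩
  · have iso : A.induce (f w) ≃g B.induce (⇑e '' f w) :=
      { toEquiv := e.toEquiv.image (f w)
        map_rel_iff' := by
          intro x y
          exact e.map_adj_iff }
    exact (iso.connected_iff).mp (hconn w)
  · intro x y hxy
    obtain ⟨v₁, hv₁, v₂, hv₂, hA⟩ := hadj hxy
    exact ⟨e v₁, ⟨v₁, hv₁, rfl⟩, e v₂, ⟨v₂, hv₂, rfl⟩, e.map_adj_iff.mpr hA⟩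

lemma isLinkless_congr {V W : Type} {A : SimpleGraph V} {B : SimpleGraph W}
    (e : A ≃g B) (h : IsLinkless A) : IsLinkless B :=
  fun _ P hP hmin => h P hP (isMinor_congr e.symm hmin)

/-- `addEdge` transported along an isomorphism. -/
def addEdge_iso {V W : Type} {A : SimpleGraph V} {B : SimpleGraph W} (e : A ≃g B) (a b : V) :
    addEdge A a b ≃g addEdge B (e a) (e b) where
  toEquiv := e.toEquiv
  map_rel_iff' := by
    intro x y
    show (addEdge B (e a) (e b)).Adj (e x) (e y) ↔ (addEdge A a b).Adj x y
    unfold addEdge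
    rw [SimpleGraph.sup_adj, SimpleGraph.sup_adj, SimpleGraph.fromEdgeSet_adj,
      SimpleGraph.fromEdgeSet_adj, e.map_adj_iff]
    have h1 : s(e x, e y) ∈ ({s(e a, e b)} : Set (Sym2 W)) ↔ s(x, y) ∈ ({s(a, b)} : Set (Sym2 V)) := by
      simp only [Set.mem_singleton_iff, Sym2.eq_iff]
      constructor
      · rintro (⟨h1, h2⟩ | ⟨h1, h2⟩)
        · exact Or.inl ⟨e.injective h1, e.injective h2⟩
        · exact Or.inr ⟨e.injective h1, e.injective h2⟩
      · rintro (⟨rfl, rfl⟩ | ⟨rfl, rfl⟩)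
        · exact Or.inl ⟨rfl, rfl⟩
        · exact Or.inr ⟨rfl, rfl⟩
    have h2 : e x ≠ e y ↔ x ≠ y := by
      constructor
      · intro h hxy; exact h (hxy ▸ rfl)
      · intro h hxy; exact h (e.injective hxy)
    rw [h1, h2]

lemma isMaxnil_congr {V W : Type} {A : SimpleGraph V} {B : SimpleGraph W}
    (e : A ≃g B) (h : IsMaxnil A) : IsMaxnil B := by
  obtain ⟨hL, hmax⟩ := h
  refine ⟨isLinkless_congr e hL, ?_⟩
  intro a b hab hnadj hLB
  have hab' : e.symm a ≠ e.symm b := fun hh => hab (e.toEquiv.symm.injective hh)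
  have hnadj' : ¬ A.Adj (e.symm a) (e.symm b) := fun hh => hnadj (e.symm.map_adj_iff.mp hh)
  exact hmax _ _ hab' hnadj' (isLinkless_congr (addEdge_iso e.symm a b) hLB)
lemma induce_connected_finsingleton {V : Type} [DecidableEq V] (X : SimpleGraph V)
    (F : Finset V) (a : V) (h : F = {a}) : (X.induce ↑F).Connected := by
  apply induce_connected_singleton X _ a
  rw [h]; simp

lemma induce_connected_finpair {V : Type} [DecidableEq V] (X : SimpleGraph V)
    (F : Finset V) (a b : V) (h : F = {a, b}) (hadj : X.Adj a b) :
    (X.induce ↑F).Connected := by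
  apply induce_connected_pair X _ a b _ hadj
  rw [h]; simp

lemma minor_of_finsets {n N : ℕ} (M : SimpleGraph (Fin n)) (X : SimpleGraph (Fin N))
    (F : Fin n → Finset (Fin N))
    (hne : ∀ w, (F w).Nonempty)
    (hconn : ∀ w, (X.induce ↑(F w)).Connected)
    (hdisj : ∀ i j : Fin n, i ≠ j → Disjoint (F i) (F j))
    (hadj : ∀ x y, M.Adj x y → ∃ v₁ ∈ F x, ∃ v₂ ∈ F y, X.Adj v₁ v₂) : IsMinor M X := by
  refine ⟨fun w => ↑(F w), fun w => ?_, hconn, fun i j hij => Finset.disjoint_coe.mpr (hdisj i j hij), ?_⟩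
  · obtain ⟨x, hx⟩ := hne w
    exact ⟨x, Finset.mem_coe.mpr hx⟩
  · intro x y hxy
    obtain ⟨v₁, h₁, v₂, h₂, hA⟩ := hadj x y hxy
    exact ⟨v₁, Finset.mem_coe.mpr h₁, v₂, Finset.mem_coe.mpr h₂, hA⟩

theorem maxnil_K6e : IsMaxnil K6e := by
  refine ⟨linkless_K6e, ?_⟩
  intro a b hab hnadj
  have hcl : ∀ a b : Fin 6, a ≠ b → ¬ K6e.Adj a b →
      ((a = 0 ∧ b = 1) ∨ (a = 1 ∧ b = 0)) := by decide
  have key : ∀ a' b' : Fin 6, ((a' = 0 ∧ b' = 1) ∨ (a' = 1 ∧ b' = 0)) →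
      ¬ IsLinkless (addEdge K6e a' b') := by
    intro a' b' h
    apply not_linkless_of_K6
    refine minor_of_emb _ _ id (fun x y hh => hh) ?_
    rcases h with ⟨rfl, rfl⟩ | ⟨rfl, rfl⟩
    · exact by decide
    · exact by decide
  exact key a b (hcl a b hab hnadj)

theorem maxnil_Gr : IsMaxnil Gr := by
  refine ⟨linkless_Gr, ?_⟩
  intro a b hab hnadj
  have hcl : ∀ a b : Fin 7, a ≠ b → ¬ Gr.Adj a b →
      ((a = 0 ∧ b = 5) ∨ (a = 5 ∧ b = 0) ∨ (a = 5 ∧ b = 6) ∨ (a = 6 ∧ b = 5) ∨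
        (a = 1 ∧ b = 6) ∨ (a = 6 ∧ b = 1)) := by decide
  have e05inj : Function.Injective (![0,1,2,3,4,5] : Fin 6 → Fin 7) := by
    have : ∀ x y : Fin 6, (![0,1,2,3,4,5] : Fin 6 → Fin 7) x = ![0,1,2,3,4,5] y → x = y := by decide
    exact fun x y h => this x y h
  have e16inj : Function.Injective (![0,1,2,3,4,6] : Fin 6 → Fin 7) := by
    have : ∀ x y : Fin 6, (![0,1,2,3,4,6] : Fin 6 → Fin 7) x = ![0,1,2,3,4,6] y → x = y := by decide
    exact fun x y h => this x y h
  have pairminor : ∀ a' b' : Fin 7, ((a' = 5 ∧ b' = 6) ∨ (a' = 6 ∧ b' = 5)) →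
      IsMinor (⊤ : SimpleGraph (Fin 6)) (addEdge Gr a' b') := by
    intro a' b' h
    have hG01 : ∀ (c d : Fin 7), ((c = 5 ∧ d = 6) ∨ (c = 6 ∧ d = 5)) →
        (addEdge Gr c d).Adj 0 1 := by decide
    refine minor_of_finsets _ _ (![{0,1},{2},{3},{4},{5},{6}]) (by decide) ?_ (by decide) ?_
    · intro w
      fin_cases w
      · exact induce_connected_finpair _ _ 0 1 (by decide) (hG01 a' b' h)
      · exact induce_connected_finsingleton _ _ 2 (by decide)
      · exact induce_connected_finsingleton _ _ 3 (by decide)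
      · exact induce_connected_finsingleton _ _ 4 (by decide)
      · exact induce_connected_finsingleton _ _ 5 (by decide)
      · exact induce_connected_finsingleton _ _ 6 (by decide)
    · rcases h with ⟨rfl, rfl⟩ | ⟨rfl, rfl⟩
      · exact by decide
      · exact by decide
  rcases hcl a b hab hnadj with ⟨rfl, rfl⟩ | ⟨rfl, rfl⟩ | h | h | ⟨rfl, rfl⟩ | ⟨rfl, rfl⟩
  · exact not_linkless_of_K6 (minor_of_emb _ _ _ e05inj (by decide))
  · exact not_linkless_of_K6 (minor_of_emb _ _ _ e05inj (by decide))
  · exact not_linkless_of_K6 (pairminor _ _ (Or.inl h))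
  · exact not_linkless_of_K6 (pairminor _ _ (Or.inr h))
  · exact not_linkless_of_K6 (minor_of_emb _ _ _ e16inj (by decide))
  · exact not_linkless_of_K6 (minor_of_emb _ _ _ e16inj (by decide))
abbrev V1 : Set (Fin 7) := {v | v ≠ 6}
abbrev V2 : Set (Fin 7) := {v | v ≠ 5}

def lk1 : Fin 7 → Fin 6 := ![0, 2, 3, 4, 5, 1, 0]
def lk1' : Fin 6 → Fin 7 := ![0, 5, 1, 2, 3, 4]
def lk2 : Fin 7 → Fin 6 := ![2, 0, 3, 4, 5, 0, 1]
def lk2' : Fin 6 → Fin 7 := ![1, 6, 0, 2, 3, 4]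

lemma hmem1 : ∀ i : Fin 6, lk1' i ∈ V1 := by decide
lemma hleft1 : ∀ v : Fin 7, v ∈ V1 → lk1' (lk1 v) = v := by decide
lemma hright1 : ∀ i : Fin 6, lk1 (lk1' i) = i := by decide
lemma hadj1 : ∀ v w : Fin 7, v ∈ V1 → w ∈ V1 → (K6e.Adj (lk1 v) (lk1 w) ↔ Gr.Adj v w) := by
  decide

lemma hmem2 : ∀ i : Fin 6, lk2' i ∈ V2 := by decide
lemma hleft2 : ∀ v : Fin 7, v ∈ V2 → lk2' (lk2 v) = v := by decide
lemma hright2 : ∀ i : Fin 6, lk2 (lk2' i) = i := by decide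
lemma hadj2 : ∀ v w : Fin 7, v ∈ V2 → w ∈ V2 → (K6e.Adj (lk2 v) (lk2 w) ↔ Gr.Adj v w) := by
  decide

def iso1 : Gr.induce V1 ≃g K6e where
  toEquiv := ⟨fun x => lk1 x.1, fun i => ⟨lk1' i, hmem1 i⟩,
    fun x => Subtype.ext (hleft1 x.1 x.2), fun i => hright1 i⟩
  map_rel_iff' := @fun x y => hadj1 x.1 y.1 x.2 y.2

def iso2 : Gr.induce V2 ≃g K6e where
  toEquiv := ⟨fun x => lk2 x.1, fun i => ⟨lk2' i, hmem2 i⟩,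
    fun x => Subtype.ext (hleft2 x.1 x.2), fun i => hright2 i⟩
  map_rel_iff' := @fun x y => hadj2 x.1 y.1 x.2 y.2

lemma hunion : V1 ∪ V2 = Set.univ := by
  apply Set.eq_univ_iff_forall.mpr
  intro v
  by_cases h : v = 6
  · exact Or.inr (by rw [h]; decide)
  · exact Or.inl h

lemma hinter_fin : V1 ∩ V2 = ↑({0, 1, 2, 3, 4} : Finset (Fin 7)) := by
  have hdec : ∀ v : Fin 7, (v ≠ 6 ∧ v ≠ 5) ↔ v ∈ ({0, 1, 2, 3, 4} : Finset (Fin 7)) := by decide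
  ext v
  exact (hdec v).trans (Finset.mem_coe).symm

/-- There is a maxnil graph `G` on 7 vertices that is the clique sum over `K₅` of two
maxnil graphs, each isomorphic to `K₆` minus an edge. -/
theorem stmt_13 :
    ∃ (G : SimpleGraph (Fin 7)) (V₁ V₂ : Set (Fin 7)),
      V₁ ∪ V₂ = Set.univ ∧
      (V₁ ∩ V₂).ncard = 5 ∧
      (∀ a ∈ V₁ ∩ V₂, ∀ b ∈ V₁ ∩ V₂, a ≠ b → G.Adj a b) ∧
      (∀ a b : Fin 7, G.Adj a b → (a ∈ V₁ ∧ b ∈ V₁) ∨ (a ∈ V₂ ∧ b ∈ V₂)) ∧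
      IsMaxnil (G.induce V₁) ∧ IsMaxnil (G.induce V₂) ∧
      Nonempty
        (G.induce V₁ ≃g ((⊤ : SimpleGraph (Fin 6)).deleteEdges {s((0 : Fin 6), 1)})) ∧
      Nonempty
        (G.induce V₂ ≃g ((⊤ : SimpleGraph (Fin 6)).deleteEdges {s((0 : Fin 6), 1)})) ∧
      IsMaxnil G := by
  refine ⟨Gr, V1, V2, hunion, ?_, ?_, ?_, ?_, ?_, ⟨iso1⟩, ⟨iso2⟩, maxnil_Gr⟩
  · rw [hinter_fin, Set.ncard_coe_finset]
    rfl
  · have hdec : ∀ a b : Fin 7, a ≠ 6 → a ≠ 5 → b ≠ 6 → b ≠ 5 → a ≠ b → Gr.Adj a b := by decide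
    intro a ha b hb hab
    exact hdec a b ha.1 ha.2 hb.1 hb.2 hab
  · have hdec : ∀ a b : Fin 7, Gr.Adj a b → ((a ≠ 6 ∧ b ≠ 6) ∨ (a ≠ 5 ∧ b ≠ 5)) := by decide
    exact hdec
  · exact isMaxnil_congr iso1.symm maxnil_K6e
  · exact isMaxnil_congr iso2.symm maxnil_K6e
end
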